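/- arXiv:1807.04197 — 3 statements merged into one kernel-verified Lean document; each statement's English description precedes it below -/
import Mathlib

section
/- For any Young diagram ν with at least one box, the sum over all Young diagrams λ obtained from ν by removing one corner box of 1/H_λ equals |ν|/H_ν, where |ν| is the number of boxes of ν and H denotes the product of hook lengths. -/
open Finset

/-- The content of a box with (0-indexed) row `c.1` and column `c.2`. -/
def boxContent (c : ℕ × ℕ) : ℤ := (c.2 : ℤ) - (c.1 : ℤ)

/-- The hook length of a box `c` in a diagram with set of boxes `s`:
arm length plus leg length plus one. -/
def hook (s : Finset (ℕ × ℕ)) (c : ℕ × ℕ) : ℕ :=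
  (s.filter fun d => d.1 = c.1 ∧ c.2 < d.2).card +
  (s.filter fun d => d.2 = c.2 ∧ c.1 < d.1).card + 1

/-- The product of all hook lengths. -/
def Hprod (s : Finset (ℕ × ℕ)) : ℕ := ∏ c ∈ s, hook s c

/-- The removable corner boxes of a diagram with boxes `s`. -/
def corners (s : Finset (ℕ × ℕ)) : Finset (ℕ × ℕ) :=
  s.filter fun c => (c.1 + 1, c.2) ∉ s ∧ (c.1, c.2 + 1) ∉ s


section Aux
open Polynomial
open Polynomial

-- top coefficients of ∏ (X - C (c y))
lemma nodal_coeffs (c : ℚ → ℚ) (s : Finset ℚ) :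
    ((X:ℚ[X])^2 * ∏ y ∈ s, (X - C (c y))).coeff (s.card + 1) = -(∑ y ∈ s, c y) ∧
    ((X:ℚ[X])^2 * ∏ y ∈ s, (X - C (c y))).coeff (s.card) =
      ((∑ y ∈ s, c y)^2 - ∑ y ∈ s, (c y)^2)/2 := by
  classical
  induction s using Finset.induction_on with
  | empty => simp
  | @insert a s ha ih =>
    obtain ⟨ih1, ih2⟩ := ih
    have hmon : ((∏ y ∈ s, (X - C (c y))) : ℚ[X]).Monic :=
      monic_prod_of_monic _ _ (fun y _ => monic_X_sub_C _)
    have hdeg : ((∏ y ∈ s, (X - C (c y))) : ℚ[X]).natDegree = s.card := by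
      rw [natDegree_prod_of_monic _ _ (fun y _ => monic_X_sub_C _)]
      simp [natDegree_X_sub_C]
    have hmon2 : ((X:ℚ[X])^2 * ∏ y ∈ s, (X - C (c y))).Monic :=
      (monic_X_pow 2).mul hmon
    have hdeg2 : ((X:ℚ[X])^2 * ∏ y ∈ s, (X - C (c y))).natDegree = s.card + 2 := by
      rw [natDegree_mul (monic_X_pow 2).ne_zero hmon.ne_zero, natDegree_X_pow, hdeg]; ring
    have htop : ((X:ℚ[X])^2 * ∏ y ∈ s, (X - C (c y))).coeff (s.card + 2) = 1 := by
      have := hmon2.coeff_natDegree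
      rwa [hdeg2] at this
    have hab : ∀ k, ((X:ℚ[X])^2 * ∏ y ∈ insert a s, (X - C (c y))).coeff (k+1)
        = ((X:ℚ[X])^2 * ∏ y ∈ s, (X - C (c y))).coeff k
          - c a * ((X:ℚ[X])^2 * ∏ y ∈ s, (X - C (c y))).coeff (k+1) := by
      intro k
      rw [Finset.prod_insert ha]
      have : (X:ℚ[X])^2 * ((X - C (c a)) * ∏ y ∈ s, (X - C (c y)))
          = X * ((X:ℚ[X])^2 * ∏ y ∈ s, (X - C (c y)))
            - C (c a) * ((X:ℚ[X])^2 * ∏ y ∈ s, (X - C (c y))) := by ring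
      rw [this, coeff_sub, coeff_X_mul, coeff_C_mul]
    constructor
    · rw [card_insert_of_notMem ha, hab (s.card + 1), htop, ih1, Finset.sum_insert ha]
      ring
    · rw [card_insert_of_notMem ha, hab s.card, ih1, ih2,
        Finset.sum_insert ha, Finset.sum_insert ha]
      ring

lemma interp_coeff (s : Finset ℚ) (f : ℚ → ℚ) :
    (Lagrange.interpolate s id f).coeff (s.card - 1)
      = ∑ x ∈ s, f x * (∏ y ∈ s.erase x, (x - y))⁻¹ := by
  classical
  rw [Lagrange.interpolate_apply, finset_sum_coeff]
  refine Finset.sum_congr rfl fun x hx => ?_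
  rw [coeff_C_mul]
  congr 1
  have hb : Lagrange.basis s id x
      = C ((∏ y ∈ s.erase x, (x - y))⁻¹) * ∏ y ∈ s.erase x, (X - C y) := by
    unfold Lagrange.basis Lagrange.basisDivisor
    rw [Finset.prod_mul_distrib, ← map_prod, ← Finset.prod_inv_distrib]
    simp
  rw [hb, coeff_C_mul]
  have hmon : ((∏ y ∈ s.erase x, (X - C y)) : ℚ[X]).Monic :=
    monic_prod_of_monic _ _ (fun y _ => monic_X_sub_C _)
  have hdeg : ((∏ y ∈ s.erase x, (X - C y)) : ℚ[X]).natDegree = s.card - 1 := by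
    rw [natDegree_prod_of_monic _ _ (fun y _ => monic_X_sub_C _)]
    simp [natDegree_X_sub_C, Finset.card_erase_of_mem hx]
  have := hmon.coeff_natDegree
  rw [hdeg] at this
  rw [this, mul_one]

lemma DD_of_poly (s : Finset ℚ) (R : ℚ[X]) (hR : R.degree < s.card) :
    ∑ x ∈ s, R.eval x * (∏ y ∈ s.erase x, (x - y))⁻¹ = R.coeff (s.card - 1) := by
  classical
  have hinj : Set.InjOn (id : ℚ → ℚ) s := Function.injective_id.injOn
  have h := Lagrange.eq_interpolate (f := R) hinj hR
  rw [← interp_coeff s (fun x => R.eval x)]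
  congr 1
  exact h.symm

lemma key_identity (s : Finset ℚ) (hs : s.Nonempty) :
    ∑ x ∈ s, (x * ∏ y ∈ s.erase x, ((x - 1 - y)/(x - y)))
      = (∑ x ∈ s, x) - (s.card : ℚ) * ((s.card : ℚ) - 1)/2 := by
  classical
  set r := s.card with hr
  have hr1 : 1 ≤ r := Finset.card_pos.mpr hs
  set S1 : ℚ := ∑ x ∈ s, x with hS1
  set N : ℚ[X] := ∏ y ∈ s, (X - C y) with hN
  set A : ℚ[X] := ∏ y ∈ s, (X - C (y+1)) with hA
  set R : ℚ[X] := X * A - (X - C (r:ℚ)) * N with hR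
  -- coefficient facts for N
  have hNmon : N.Monic := monic_prod_of_monic _ _ (fun y _ => monic_X_sub_C _)
  have hNdeg : N.natDegree = r := by
    rw [hN, natDegree_prod_of_monic _ _ (fun y _ => monic_X_sub_C _)]
    simp [natDegree_X_sub_C, hr]
  have hN2mon : ((X:ℚ[X])^2 * N).Monic := (monic_X_pow 2).mul hNmon
  have hN2deg : ((X:ℚ[X])^2 * N).natDegree = r + 2 := by
    rw [natDegree_mul (monic_X_pow 2).ne_zero hNmon.ne_zero, natDegree_X_pow, hNdeg]; ring
  have hNtop : ((X:ℚ[X])^2 * N).coeff (r+2) = 1 := by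
    have := hN2mon.coeff_natDegree; rwa [hN2deg] at this
  have hN0 : ∀ k, r + 2 < k → ((X:ℚ[X])^2 * N).coeff k = 0 := fun k hk =>
    coeff_eq_zero_of_natDegree_lt (by rw [hN2deg]; omega)
  have hN1 : ((X:ℚ[X])^2 * N).coeff (r+1) = -S1 := (nodal_coeffs id s).1
  have hNE2 : ((X:ℚ[X])^2 * N).coeff r = (S1^2 - ∑ y ∈ s, y^2)/2 := (nodal_coeffs id s).2
  -- coefficient facts for A
  have hAmon : A.Monic := monic_prod_of_monic _ _ (fun y _ => monic_X_sub_C _)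
  have hAdeg : A.natDegree = r := by
    rw [hA, natDegree_prod_of_monic _ _ (fun y _ => monic_X_sub_C _)]
    simp only [natDegree_X_sub_C, Finset.sum_const, smul_eq_mul, mul_one, hr]
  have hA2mon : ((X:ℚ[X])^2 * A).Monic := (monic_X_pow 2).mul hAmon
  have hA2deg : ((X:ℚ[X])^2 * A).natDegree = r + 2 := by
    rw [natDegree_mul (monic_X_pow 2).ne_zero hAmon.ne_zero, natDegree_X_pow, hAdeg]; ring
  have hAtop : ((X:ℚ[X])^2 * A).coeff (r+2) = 1 := by
    have := hA2mon.coeff_natDegree; rwa [hA2deg] at this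
  have hA0 : ∀ k, r + 2 < k → ((X:ℚ[X])^2 * A).coeff k = 0 := fun k hk =>
    coeff_eq_zero_of_natDegree_lt (by rw [hA2deg]; omega)
  have hsum1 : ∑ y ∈ s, (y + 1) = S1 + r := by
    rw [Finset.sum_add_distrib, Finset.sum_const, nsmul_eq_mul, mul_one]
  have hA1 : ((X:ℚ[X])^2 * A).coeff (r+1) = -(S1 + r) := by
    have := (nodal_coeffs (fun y => y + 1) s).1
    rwa [hsum1] at this
  have hsum2 : ∑ y ∈ s, (y + 1)^2 = (∑ y ∈ s, y^2) + 2*S1 + r := by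
    have : ∀ y ∈ s, (y+1)^2 = y^2 + 2*y + 1 := fun y _ => by ring
    rw [Finset.sum_congr rfl this, Finset.sum_add_distrib, Finset.sum_add_distrib,
      Finset.sum_const, nsmul_eq_mul, mul_one, ← Finset.mul_sum]
  have hAE2 : ((X:ℚ[X])^2 * A).coeff r = ((S1+r)^2 - ((∑ y ∈ s, y^2) + 2*S1 + r))/2 := by
    have := (nodal_coeffs (fun y => y + 1) s).2
    rwa [hsum1, hsum2] at this
  -- X² * R expansion
  have hXR : (X:ℚ[X])^2 * R
      = X * ((X:ℚ[X])^2 * A) - (X * ((X:ℚ[X])^2 * N) - C (r:ℚ) * ((X:ℚ[X])^2 * N)) := by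
    rw [hR]; ring
  have hRcoeff : ∀ k, R.coeff k = ((X:ℚ[X])^2 * R).coeff (k + 2) := by
    intro k
    rw [coeff_X_pow_mul]
  have hXRcoeff : ∀ k, ((X:ℚ[X])^2 * R).coeff (k+1)
      = ((X:ℚ[X])^2 * A).coeff k - (((X:ℚ[X])^2 * N).coeff k
          - (r:ℚ) * ((X:ℚ[X])^2 * N).coeff (k+1)) := by
    intro k
    rw [hXR, coeff_sub, coeff_sub, coeff_X_mul, coeff_X_mul, coeff_C_mul]
  -- degree bound
  have hRdeg : R.degree < r := by
    rw [degree_lt_iff_coeff_zero]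
    intro m hm
    have hm' : r ≤ m := by exact_mod_cast hm
    rcases (by omega : m = r ∨ m = r + 1 ∨ r + 2 ≤ m ∧ m + 1 = (m - 1) + 2 ∧ r + 2 < m + 2)
      with h1 | h1 | ⟨h1, h2, h3⟩
    · subst h1
      rw [hRcoeff, (by ring : r + 2 = (r+1)+1), hXRcoeff, hA1, hN1, hNtop]
      ring
    · subst h1
      rw [hRcoeff, (by ring : r + 1 + 2 = (r+2)+1), hXRcoeff, hAtop, hNtop,
        hN0 _ (by omega)]
      ring
    · rw [hRcoeff, (by omega : m + 2 = (m+1)+1), hXRcoeff, hA0 _ (by omega),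
        hN0 _ (by omega), hN0 _ (by omega)]
      ring
  -- evaluate R on s
  have hNeval : ∀ x ∈ s, N.eval x = 0 := by
    intro x hx
    rw [hN, eval_prod]
    exact Finset.prod_eq_zero hx (by simp)
  have hterm : ∀ x ∈ s, x * ∏ y ∈ s.erase x, ((x - 1 - y)/(x - y))
      = -(R.eval x * (∏ y ∈ s.erase x, (x - y))⁻¹) := by
    intro x hx
    have hAe : A.eval x = -(∏ y ∈ s.erase x, (x - 1 - y)) := by
      rw [hA, eval_prod]
      rw [← Finset.mul_prod_erase _ _ hx]
      simp only [eval_sub, eval_X, eval_C]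
      rw [show x - (x + 1) = -1 by ring, neg_one_mul]
      congr 1
      exact Finset.prod_congr rfl fun y _ => by ring
    have hRe : R.eval x = -(x * ∏ y ∈ s.erase x, (x - 1 - y)) := by
      rw [hR]
      simp only [eval_sub, eval_mul, eval_X, eval_C, hNeval x hx, mul_zero, sub_zero, hAe]
      ring
    rw [hRe, Finset.prod_div_distrib, div_eq_mul_inv]
    ring
  rw [Finset.sum_congr rfl hterm, Finset.sum_neg_distrib, DD_of_poly s R hRdeg]
  have hfin : R.coeff (r - 1) = ((X:ℚ[X])^2 * R).coeff (r + 1) := by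
    rw [hRcoeff (r-1)]
    congr 1
    omega
  rw [← hr, hfin, (by ring : r + 1 = r + 1), show r + 1 = r + 1 from rfl]
  rw [hXRcoeff r, hAE2, hNE2, hN1]
  ring

lemma key_identity' (R : ℕ) (hR : 1 ≤ R) (b : ℕ → ℚ)
    (hinj : Set.InjOn b (Finset.range R)) :
    ∑ a ∈ Finset.range R, b a * ∏ i ∈ (Finset.range R).erase a, ((b a - 1 - b i)/(b a - b i))
      = (∑ a ∈ Finset.range R, b a) - (R:ℚ)*((R:ℚ)-1)/2 := by
  classical
  set s : Finset ℚ := (Finset.range R).image b with hs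
  have hcard : s.card = R := by
    rw [hs, Finset.card_image_of_injOn hinj, Finset.card_range]
  have herase : ∀ a ∈ Finset.range R, s.erase (b a) = ((Finset.range R).erase a).image b := by
    intro a ha
    ext z
    simp only [Finset.mem_erase, hs, Finset.mem_image, Finset.mem_range] at *
    constructor
    · rintro ⟨hz, i, hi, rfl⟩
      exact ⟨i, ⟨fun he => hz (by rw [he]), hi⟩, rfl⟩
    · rintro ⟨i, ⟨hia, hi⟩, rfl⟩
      refine ⟨fun he => hia (hinj (by simpa using hi) (by simpa using ha) he), i, hi, rfl⟩
  have hmain := key_identity s ⟨b 0, by simp [hs]; exact ⟨0, by omega, rfl⟩⟩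
  rw [hs, Finset.sum_image (fun x hx y hy => hinj (by simpa using hx) (by simpa using hy)),
    Finset.sum_image (fun x hx y hy => hinj (by simpa using hx) (by simpa using hy))] at hmain
  rw [← hs] at hmain
  rw [hcard] at hmain
  rw [← hmain]
  refine Finset.sum_congr rfl fun a ha => ?_
  congr 1
  rw [herase a ha]
  rw [Finset.prod_image]
  intro x hx y hy hxy
  exact hinj (by simp at hx; simpa using hx.1) (by simp at hy; simpa using hy.1) hxy

def bfun (ν : YoungDiagram) (R m : ℕ) : ℕ := ν.rowLen m + (R - 1 - m)

lemma hook_formula (ν : YoungDiagram) (i j : ℕ) (hij : (i, j) ∈ ν) :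
    hook ν.cells (i, j) = (ν.rowLen i - j - 1) + (ν.colLen j - i - 1) + 1 := by
  have harm : ν.cells.filter (fun d => d.1 = (i,j).1 ∧ (i,j).2 < d.2)
      = (Finset.Ioo j (ν.rowLen i)).image (fun j2 => (i, j2)) := by
    ext ⟨a, b⟩
    simp only [Finset.mem_filter, Finset.mem_image, Finset.mem_Ioo, YoungDiagram.mem_cells]
    constructor
    · rintro ⟨hmem, ha, hb⟩
      subst ha
      exact ⟨b, ⟨hb, YoungDiagram.mem_iff_lt_rowLen.mp hmem⟩, rfl⟩
    · rintro ⟨j2, ⟨hj2, hj2'⟩, heq⟩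
      obtain ⟨rfl, rfl⟩ := Prod.mk.injEq _ _ _ _ ▸ heq
      exact ⟨YoungDiagram.mem_iff_lt_rowLen.mpr hj2', rfl, hj2⟩
  have hleg : ν.cells.filter (fun d => d.2 = (i,j).2 ∧ (i,j).1 < d.1)
      = (Finset.Ioo i (ν.colLen j)).image (fun i2 => (i2, j)) := by
    ext ⟨a, b⟩
    simp only [Finset.mem_filter, Finset.mem_image, Finset.mem_Ioo, YoungDiagram.mem_cells]
    constructor
    · rintro ⟨hmem, hb, ha⟩
      subst hb
      exact ⟨a, ⟨ha, YoungDiagram.mem_iff_lt_colLen.mp hmem⟩, rfl⟩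
    · rintro ⟨i2, ⟨hi2, hi2'⟩, heq⟩
      obtain ⟨rfl, rfl⟩ := Prod.mk.injEq _ _ _ _ ▸ heq
      exact ⟨YoungDiagram.mem_iff_lt_colLen.mpr hi2', rfl, hi2⟩
  rw [hook, harm, hleg,
    Finset.card_image_of_injective _ (fun x y h => by simpa using h),
    Finset.card_image_of_injective _ (fun x y h => by simpa using h),
    Nat.card_Ioo, Nat.card_Ioo]

lemma cells_eq_biUnion (ν : YoungDiagram) (R : ℕ) (hR : ν.colLen 0 ≤ R) :
    ν.cells = (Finset.range R).biUnion
      (fun i => (Finset.range (ν.rowLen i)).image (fun j => (i, j))) := by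
  ext ⟨a, b⟩
  simp only [YoungDiagram.mem_cells, Finset.mem_biUnion, Finset.mem_range, Finset.mem_image]
  constructor
  · intro hmem
    have h0 : (a, 0) ∈ ν := ν.up_left_mem (le_refl a) (Nat.zero_le b) hmem
    have haR : a < ν.colLen 0 := YoungDiagram.mem_iff_lt_colLen.mp h0
    exact ⟨a, by omega, b, YoungDiagram.mem_iff_lt_rowLen.mp hmem, rfl⟩
  · rintro ⟨i, hi, j, hj, heq⟩
    obtain ⟨rfl, rfl⟩ := Prod.mk.injEq _ _ _ _ ▸ heq
    exact YoungDiagram.mem_iff_lt_rowLen.mpr hj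

lemma pairwise_rows (ν : YoungDiagram) (R : ℕ) :
    Set.PairwiseDisjoint ↑(Finset.range R)
      (fun i => (Finset.range (ν.rowLen i)).image (fun j => (i, j))) := by
  intro x _ y _ hxy
  simp only [Function.onFun, Finset.disjoint_left, Finset.mem_image, Finset.mem_range]
  rintro ⟨a, b⟩ ⟨j, _, heq⟩ ⟨j', _, heq'⟩
  obtain ⟨rfl, rfl⟩ := Prod.mk.injEq _ _ _ _ ▸ heq
  obtain ⟨rfl, rfl⟩ := Prod.mk.injEq _ _ _ _ ▸ heq'
  exact hxy rfl

lemma Hprod_rows (ν : YoungDiagram) (R : ℕ) (hR : ν.colLen 0 ≤ R) :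
    Hprod ν.cells = ∏ i ∈ Finset.range R, ∏ j ∈ Finset.range (ν.rowLen i),
      hook ν.cells (i, j) := by
  rw [Hprod, Finset.prod_congr (cells_eq_biUnion ν R hR) (fun _ _ => rfl),
    Finset.prod_biUnion (pairwise_rows ν R)]
  exact Finset.prod_congr rfl fun i _ =>
    Finset.prod_image (fun x _ y _ h => by simpa using h)

lemma card_cells_eq (ν : YoungDiagram) (R : ℕ) (hR : ν.colLen 0 ≤ R) :
    ν.cells.card = ∑ i ∈ Finset.range R, ν.rowLen i := by
  rw [cells_eq_biUnion ν R hR,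
    Finset.card_biUnion (fun x hx y hy hxy =>
      pairwise_rows ν R (Finset.mem_coe.mpr hx) (Finset.mem_coe.mpr hy) hxy)]
  exact Finset.sum_congr rfl fun i _ => by
    rw [Finset.card_image_of_injective _ (fun x y h => by simpa using h), Finset.card_range]

lemma bfun_strict (ν : YoungDiagram) (R : ℕ) {x y : ℕ} (hxy : x < y) (hy : y < R) :
    bfun ν R y < bfun ν R x := by
  have := ν.rowLen_anti x y (le_of_lt hxy)
  unfold bfun
  omega

lemma row_hooks (ν : YoungDiagram) (R : ℕ) (hR : ν.colLen 0 ≤ R) (i : ℕ) (hi : i < R) :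
    (∏ j ∈ Finset.range (ν.rowLen i), hook ν.cells (i, j))
      * ∏ k ∈ Finset.Ioo i R, (bfun ν R i - bfun ν R k) = Nat.factorial (bfun ν R i) := by
  classical
  set L := ν.rowLen i with hL
  have hmem : ∀ j, j < L → (i, j) ∈ ν := fun j hj => YoungDiagram.mem_iff_lt_rowLen.mpr hj
  have hcolj : ∀ j, j < L → i < ν.colLen j := fun j hj =>
    YoungDiagram.mem_iff_lt_colLen.mp (hmem j hj)
  have hcol0 : ∀ j : ℕ, ν.colLen j ≤ R := fun j =>
    le_trans (ν.colLen_anti 0 j (Nat.zero_le j)) hR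
  have hookf : ∀ j, j < L → hook ν.cells (i, j)
      = (L - j - 1) + (ν.colLen j - i - 1) + 1 := fun j hj => hook_formula ν i j (hmem j hj)
  have hanti : ∀ j1 j2, j1 < j2 → j2 < L → hook ν.cells (i, j2) < hook ν.cells (i, j1) := by
    intro j1 j2 h12 h2
    rw [hookf j1 (by omega), hookf j2 h2]
    have h1 := ν.colLen_anti j1 j2 (le_of_lt h12)
    have h3 := hcolj j2 h2
    omega
  have hinj : Set.InjOn (fun j => hook ν.cells (i, j)) ↑(Finset.range L) := by
    intro x hx y hy hxy
    simp only [Finset.coe_range, Set.mem_Iio] at hx hy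
    have hxy' : hook ν.cells (i, x) = hook ν.cells (i, y) := hxy
    by_contra hne
    rcases Nat.lt_or_ge x y with h | h
    · have := hanti x y h hy; omega
    · have := hanti y x (by omega) hx; omega
  set A := (Finset.range L).image (fun j => hook ν.cells (i, j)) with hA
  set Forb := (Finset.Ioo i R).image (fun k => bfun ν R i - bfun ν R k) with hForb
  set B := Finset.Icc 1 (bfun ν R i) \ Forb with hB
  have hbi : bfun ν R i = L + (R - 1 - i) := rfl
  have hsubF : Forb ⊆ Finset.Icc 1 (bfun ν R i) := by
    intro x hx
    rw [hForb, Finset.mem_image] at hx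
    obtain ⟨k, hk, rfl⟩ := hx
    rw [Finset.mem_Ioo] at hk
    have := bfun_strict ν R hk.1 hk.2
    rw [Finset.mem_Icc]
    omega
  have hinjF : Set.InjOn (fun k => bfun ν R i - bfun ν R k) ↑(Finset.Ioo i R) := by
    intro x hx y hy hxy
    simp only [Finset.coe_Ioo, Set.mem_Ioo] at hx hy
    have hxy' : bfun ν R i - bfun ν R x = bfun ν R i - bfun ν R y := hxy
    have h1 := bfun_strict ν R hx.1 hx.2
    have h2 := bfun_strict ν R hy.1 hy.2
    by_contra hne
    rcases Nat.lt_or_ge x y with h | h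
    · have := bfun_strict ν R h hy.2; omega
    · have := bfun_strict ν R (by omega : y < x) hx.2; omega
  have hAB : A ⊆ B := by
    intro x hx
    rw [hA, Finset.mem_image] at hx
    obtain ⟨j, hj, rfl⟩ := hx
    rw [Finset.mem_range] at hj
    rw [hB, Finset.mem_sdiff, Finset.mem_Icc]
    refine ⟨⟨?_, ?_⟩, ?_⟩
    · rw [hookf j hj]; omega
    · rw [hookf j hj]
      have := hcol0 j
      have := hcolj j hj
      omega
    · intro hmemF
      rw [hForb, Finset.mem_image] at hmemF
      obtain ⟨k, hk, hkeq⟩ := hmemF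
      rw [Finset.mem_Ioo] at hk
      have hcase : (j < ν.rowLen k ∧ k < ν.colLen j) ∨ (ν.rowLen k ≤ j ∧ ν.colLen j ≤ k) := by
        by_cases hc : j < ν.rowLen k
        · exact Or.inl ⟨hc, YoungDiagram.mem_iff_lt_colLen.mp
            (YoungDiagram.mem_iff_lt_rowLen.mpr hc)⟩
        · refine Or.inr ⟨by omega, ?_⟩
          by_contra hcc
          exact hc (YoungDiagram.mem_iff_lt_rowLen.mp
            (YoungDiagram.mem_iff_lt_colLen.mpr (by omega)))
      have hrowk : ν.rowLen k ≤ L := by rw [hL]; exact ν.rowLen_anti i k (by omega)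
      rw [hookf j hj] at hkeq
      have hc0 := hcol0 j
      have hcj := hcolj j hj
      unfold bfun at hkeq
      omega
  have hcardA : A.card = L := by
    rw [hA, Finset.card_image_of_injOn hinj, Finset.card_range]
  have hcardB : B.card = L := by
    rw [hB, Finset.card_sdiff_of_subset hsubF, hForb, Finset.card_image_of_injOn hinjF,
      Nat.card_Ioo, Nat.card_Icc]
    omega
  have hABeq : A = B := Finset.eq_of_subset_of_card_le hAB (by omega)
  have hprodA : ∏ x ∈ A, x = ∏ j ∈ Finset.range L, hook ν.cells (i, j) := by
    rw [hA]
    exact Finset.prod_image fun x hx y hy h =>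
      hinj (by simpa using hx) (by simpa using hy) h
  have hprodF : ∏ x ∈ Forb, x = ∏ k ∈ Finset.Ioo i R, (bfun ν R i - bfun ν R k) := by
    rw [hForb]
    exact Finset.prod_image fun x hx y hy h =>
      hinjF (by simpa using hx) (by simpa using hy) h
  calc (∏ j ∈ Finset.range L, hook ν.cells (i, j))
        * ∏ k ∈ Finset.Ioo i R, (bfun ν R i - bfun ν R k)
      = (∏ x ∈ B, x) * ∏ x ∈ Forb, x := by rw [← hprodA, ← hprodF, hABeq]
    _ = ∏ x ∈ Finset.Icc 1 (bfun ν R i), x := by rw [hB, Finset.prod_sdiff hsubF]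
    _ = Nat.factorial (bfun ν R i) := by
        rw [← Finset.Ico_add_one_right_eq_Icc, Finset.prod_Ico_id_eq_factorial]

lemma Hprod_beta (ν : YoungDiagram) (R : ℕ) (hR : ν.colLen 0 ≤ R) :
    Hprod ν.cells * ∏ i ∈ Finset.range R, ∏ k ∈ Finset.Ioo i R, (bfun ν R i - bfun ν R k)
      = ∏ i ∈ Finset.range R, Nat.factorial (bfun ν R i) := by
  rw [Hprod_rows ν R hR, ← Finset.prod_mul_distrib]
  exact Finset.prod_congr rfl fun i hi => row_hooks ν R hR i (Finset.mem_range.mp hi)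

lemma rowLen_eq_of {μ : YoungDiagram} {i m : ℕ} (h : ∀ j, (i, j) ∈ μ ↔ j < m) :
    μ.rowLen i = m := by
  rcases Nat.lt_trichotomy (μ.rowLen i) m with hlt | he | hgt
  · have := YoungDiagram.mem_iff_lt_rowLen.mp ((h (μ.rowLen i)).mpr hlt)
    omega
  · exact he
  · have := (h m).mp (YoungDiagram.mem_iff_lt_rowLen.mpr hgt)
    omega

lemma corners_eq (ν : YoungDiagram) (R : ℕ) (hRe : ν.colLen 0 = R) :
    corners ν.cells = ((Finset.range R).filter
        (fun a => ν.rowLen (a+1) < ν.rowLen a)).image (fun a => (a, ν.rowLen a - 1)) := by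
  ext ⟨a, b⟩
  simp only [corners, Finset.mem_filter, Finset.mem_image, Finset.mem_range,
    YoungDiagram.mem_cells]
  constructor
  · rintro ⟨hmem, h1, h2⟩
    have hb : b < ν.rowLen a := YoungDiagram.mem_iff_lt_rowLen.mp hmem
    have hb2 : ν.rowLen a ≤ b + 1 := by
      by_contra hc
      exact h2 (YoungDiagram.mem_iff_lt_rowLen.mpr (by omega))
    have ha1 : ν.rowLen (a+1) ≤ b := by
      by_contra hc
      exact h1 (YoungDiagram.mem_iff_lt_rowLen.mpr (by omega))
    have haR : a < R := by
      have h0 : (a, 0) ∈ ν := ν.up_left_mem (le_refl a) (Nat.zero_le b) hmem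
      have := YoungDiagram.mem_iff_lt_colLen.mp h0
      omega
    exact ⟨a, ⟨haR, by omega⟩, by simp; omega⟩
  · rintro ⟨a', ⟨ha'R, hlt⟩, heq⟩
    obtain ⟨rfl, rfl⟩ := Prod.mk.injEq _ _ _ _ ▸ heq
    have hrow : 1 ≤ ν.rowLen a' := by
      have h0 : (a', 0) ∈ ν := YoungDiagram.mem_iff_lt_colLen.mpr (by omega)
      have := YoungDiagram.mem_iff_lt_rowLen.mp h0
      omega
    refine ⟨YoungDiagram.mem_iff_lt_rowLen.mpr (by omega), fun hc => ?_, fun hc => ?_⟩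
    · have := YoungDiagram.mem_iff_lt_rowLen.mp hc
      omega
    · have := YoungDiagram.mem_iff_lt_rowLen.mp hc
      omega

lemma isLowerSet_erase (ν : YoungDiagram) (c : ℕ × ℕ) (hc : c ∈ corners ν.cells) :
    IsLowerSet (↑(ν.cells.erase c) : Set (ℕ × ℕ)) := by
  rw [corners, Finset.mem_filter] at hc
  obtain ⟨hcmem, h1, h2⟩ := hc
  intro x y hyx hx
  simp only [Finset.coe_erase, Set.mem_diff, Finset.mem_coe, Set.mem_singleton_iff] at hx ⊢
  obtain ⟨hxmem, hxc⟩ := hx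
  refine ⟨ν.isLowerSet hyx hxmem, ?_⟩
  rintro rfl
  obtain ⟨hy1, hy2⟩ := hyx
  have hxx : x = (x.1, x.2) := rfl
  rcases (by
    rcases Nat.lt_or_ge y.1 x.1 with h | h
    · exact Or.inl h
    · refine Or.inr ?_
      rcases Nat.lt_or_ge y.2 x.2 with h' | h'
      · exact h'
      · exact absurd (Prod.ext (by omega) (by omega)) (Ne.symm hxc)
    : y.1 < x.1 ∨ y.2 < x.2) with h | h
  · have hxmem' : (x.1, x.2) ∈ ν := hxmem
    exact h1 (by
      simpa using ν.up_left_mem (show y.1 + 1 ≤ x.1 by omega) hy2 hxmem')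
  · have hxmem' : (x.1, x.2) ∈ ν := hxmem
    exact h2 (by
      simpa using ν.up_left_mem hy1 (show y.2 + 1 ≤ x.2 by omega) hxmem')

lemma ratio_lemma (R a : ℕ) (haR : a < R) (b b' : ℕ → ℚ)
    (hb'a : b' a = b a - 1) (hb'o : ∀ i, i ≠ a → b' i = b i)
    (hstrict : ∀ x y, x < y → y < R → b y < b x)
    (hstrict' : ∀ x y, x < y → y < R → b' y < b' x)
    (H H' F' : ℚ) (hH : H ≠ 0) (hH' : H' ≠ 0)
    (hHeq : H * ∏ i ∈ Finset.range R, ∏ k ∈ Finset.Ioo i R, (b i - b k)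
      = b a * F')
    (hHeq' : H' * ∏ i ∈ Finset.range R, ∏ k ∈ Finset.Ioo i R, (b' i - b' k) = F') :
    (1 : ℚ) / H' = (b a * ∏ i ∈ (Finset.range R).erase a, ((b a - 1 - b i)/(b a - b i))) / H := by
  classical
  set A : ℕ → ℚ := fun i => ∏ k ∈ Finset.Ioo i R, (b i - b k) with hA
  set A' : ℕ → ℚ := fun i => ∏ k ∈ Finset.Ioo i R, (b' i - b' k) with hA'
  set D : ℚ := ∏ i ∈ Finset.range R, A i with hD
  set D' : ℚ := ∏ i ∈ Finset.range R, A' i with hD'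
  set P1 : ℚ := ∏ i ∈ Finset.range a, (b a - b i) with hP1
  set P2 : ℚ := ∏ k ∈ Finset.Ioo a R, (b a - b k) with hP2
  set Q1 : ℚ := ∏ i ∈ Finset.range a, (b a - 1 - b i) with hQ1
  set Q2 : ℚ := ∏ k ∈ Finset.Ioo a R, (b a - 1 - b k) with hQ2
  have hsplit : (Finset.range R).erase a = Finset.range a ∪ Finset.Ioo a R := by
    ext x
    simp only [Finset.mem_erase, Finset.mem_range, Finset.mem_union, Finset.mem_Ioo]
    omega
  have hdisj : Disjoint (Finset.range a) (Finset.Ioo a R) := by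
    rw [Finset.disjoint_left]
    intro x hx hx'
    simp only [Finset.mem_range] at hx
    simp only [Finset.mem_Ioo] at hx'
    omega
  -- positivity / nonvanishing
  have hDne : D ≠ 0 := by
    rw [hD]
    apply Finset.prod_ne_zero_iff.mpr
    intro i hi
    rw [hA]
    apply Finset.prod_ne_zero_iff.mpr
    intro k hk
    simp only [Finset.mem_Ioo] at hk
    have := hstrict i k hk.1 hk.2
    intro hzero
    have : b i = b k := by linarith [sub_eq_zero.mp hzero]
    linarith
  have hD'ne : D' ≠ 0 := by
    rw [hD']
    apply Finset.prod_ne_zero_iff.mpr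
    intro i hi
    apply Finset.prod_ne_zero_iff.mpr
    intro k hk
    simp only [Finset.mem_Ioo] at hk
    have := hstrict' i k hk.1 hk.2
    intro hzero
    have : b' i = b' k := by linarith [sub_eq_zero.mp hzero]
    linarith
  have hPne : ∀ i ∈ (Finset.range R).erase a, b a - b i ≠ 0 := by
    intro i hi
    simp only [Finset.mem_erase, Finset.mem_range] at hi
    rcases Nat.lt_or_ge i a with h | h
    · have := hstrict i a h haR; intro hz; linarith [sub_eq_zero.mp hz]
    · have := hstrict a i (by omega) hi.2; intro hz; linarith [sub_eq_zero.mp hz]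
  -- decompose D, D'
  have haRm : a ∈ Finset.range R := Finset.mem_range.mpr haR
  have hDdec : D = A a * ((∏ i ∈ Finset.range a, A i) * ∏ i ∈ Finset.Ioo a R, A i) := by
    rw [hD, ← Finset.mul_prod_erase _ _ haRm, hsplit, Finset.prod_union hdisj]
  have hAIoo : ∀ i ∈ Finset.Ioo a R, A' i = A i := by
    intro i hi
    simp only [Finset.mem_Ioo] at hi
    rw [hA, hA']
    refine Finset.prod_congr rfl fun k hk => ?_
    simp only [Finset.mem_Ioo] at hk
    rw [hb'o i (by omega), hb'o k (by omega)]
  have hD'dec : D' = A' a * ((∏ i ∈ Finset.range a, A' i) * ∏ i ∈ Finset.Ioo a R, A i) := by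
    rw [hD', ← Finset.mul_prod_erase _ _ haRm, hsplit, Finset.prod_union hdisj,
      Finset.prod_congr rfl hAIoo]
  have hAa : A a = P2 := rfl
  have hA'a : A' a = Q2 := by
    rw [hA', hQ2]
    refine Finset.prod_congr rfl fun k hk => ?_
    simp only [Finset.mem_Ioo] at hk
    rw [hb'a, hb'o k (by omega)]
  -- key per-factor identity for i < a
  have hkey : (∏ i ∈ Finset.range a, A' i) * P1 = (∏ i ∈ Finset.range a, A i) * Q1 := by
    rw [hP1, hQ1, ← Finset.prod_mul_distrib, ← Finset.prod_mul_distrib]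
    refine Finset.prod_congr rfl fun i hi => ?_
    simp only [Finset.mem_range] at hi
    have haIoo : a ∈ Finset.Ioo i R := Finset.mem_Ioo.mpr ⟨hi, haR⟩
    have hCi : A i = (b i - b a) * ∏ k ∈ (Finset.Ioo i R).erase a, (b i - b k) := by
      rw [show A i = ∏ k ∈ Finset.Ioo i R, (b i - b k) from rfl,
        ← Finset.mul_prod_erase _ _ haIoo]
    have hCi' : A' i = (b i - (b a - 1)) * ∏ k ∈ (Finset.Ioo i R).erase a, (b i - b k) := by
      rw [show A' i = ∏ k ∈ Finset.Ioo i R, (b' i - b' k) from rfl,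
        ← Finset.mul_prod_erase _ _ haIoo, hb'a, hb'o i (by omega)]
      congr 1
      refine Finset.prod_congr rfl fun k hk => ?_
      simp only [Finset.mem_erase] at hk
      rw [hb'o k hk.1]
    rw [hCi, hCi']
    ring
  -- the main product identity
  have hPQ : D' * (P1 * P2) = (Q1 * Q2) * D := by
    calc D' * (P1 * P2)
        = ((∏ i ∈ Finset.range a, A' i) * P1) * (Q2 * (∏ i ∈ Finset.Ioo a R, A i) * P2) := by
          rw [hD'dec, hA'a]; ring
      _ = ((∏ i ∈ Finset.range a, A i) * Q1) * (Q2 * (∏ i ∈ Finset.Ioo a R, A i) * P2) := by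
          rw [hkey]
      _ = (Q1 * Q2) * D := by rw [hDdec, hAa]; ring
  -- conclude
  have hPprod : ∏ i ∈ (Finset.range R).erase a, (b a - b i) = P1 * P2 := by
    rw [hsplit, Finset.prod_union hdisj]
  have hQprod : ∏ i ∈ (Finset.range R).erase a, (b a - 1 - b i) = Q1 * Q2 := by
    rw [hsplit, Finset.prod_union hdisj]
  have hPprodne : P1 * P2 ≠ 0 := by
    rw [← hPprod]
    exact Finset.prod_ne_zero_iff.mpr hPne
  have hF'ne : F' ≠ 0 := by
    rw [← hHeq']
    exact mul_ne_zero hH' hD'ne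
  have hdivform : ∏ i ∈ (Finset.range R).erase a, ((b a - 1 - b i)/(b a - b i))
      = (Q1 * Q2) / (P1 * P2) := by
    rw [Finset.prod_div_distrib, hPprod, hQprod]
  rw [hdivform]
  rw [div_eq_div_iff hH' hH]
  -- 1 * H = b a * ((Q1*Q2)/(P1*P2)) * H'
  field_simp
  -- use the relations
  have e1 : H = b a * F' / D := by
    field_simp at hHeq ⊢
    linarith [hHeq]
  have e2 : H' = F' / D' := by
    field_simp at hHeq' ⊢
    linarith [hHeq']
  rw [e1, e2]
  field_simp
  -- goal should now follow from hPQ by ring manipulation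
  rw [eq_div_iff hPprodne]
  linear_combination (b a) * hPQ

lemma Hprod_pos (s : Finset (ℕ × ℕ)) : 0 < Hprod s := by
  apply Finset.prod_pos
  intro c _
  unfold hook
  omega

lemma Hprod_beta_q (μ : YoungDiagram) (R : ℕ) (hμ : μ.colLen 0 ≤ R) :
    (Hprod μ.cells : ℚ) * ∏ i ∈ Finset.range R, ∏ k ∈ Finset.Ioo i R,
        ((bfun μ R i : ℚ) - (bfun μ R k : ℚ))
      = ∏ i ∈ Finset.range R, (Nat.factorial (bfun μ R i) : ℚ) := by
  have hnat := Hprod_beta μ R hμ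
  have : ((Hprod μ.cells * ∏ i ∈ Finset.range R, ∏ k ∈ Finset.Ioo i R,
      (bfun μ R i - bfun μ R k) : ℕ) : ℚ)
      = ((∏ i ∈ Finset.range R, Nat.factorial (bfun μ R i) : ℕ) : ℚ) := by
    exact congrArg (fun n : ℕ => (n : ℚ)) hnat
  push_cast at this
  rw [← this]
  congr 1
  refine Finset.prod_congr rfl fun i hi => ?_
  refine Finset.prod_congr rfl fun k hk => ?_
  simp only [Finset.mem_Ioo] at hk
  rw [Nat.cast_sub (le_of_lt (bfun_strict μ R hk.1 hk.2))]

lemma per_corner (ν : YoungDiagram) (R : ℕ) (hRdef : ν.colLen 0 = R) (a : ℕ)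
    (haR : a < R) (hcorner : ν.rowLen (a+1) < ν.rowLen a) :
    (1:ℚ) / Hprod (ν.cells.erase (a, ν.rowLen a - 1))
      = ((bfun ν R a : ℚ) * ∏ i ∈ (Finset.range R).erase a,
          (((bfun ν R a : ℚ) - 1 - (bfun ν R i : ℚ))/((bfun ν R a : ℚ) - (bfun ν R i : ℚ))))
        / Hprod ν.cells := by
  classical
  have hrowpos : ∀ m, m < R → 1 ≤ ν.rowLen m := by
    intro m hm
    have h0 : (m, 0) ∈ ν := YoungDiagram.mem_iff_lt_colLen.mpr (by omega)
    have := YoungDiagram.mem_iff_lt_rowLen.mp h0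
    omega
  have hc : (a, ν.rowLen a - 1) ∈ corners ν.cells := by
    rw [corners_eq ν R hRdef]
    exact Finset.mem_image_of_mem _
      (Finset.mem_filter.mpr ⟨Finset.mem_range.mpr haR, hcorner⟩)
  set μa : YoungDiagram := ⟨ν.cells.erase (a, ν.rowLen a - 1), isLowerSet_erase ν _ hc⟩
    with hμa
  have hμmem : ∀ p : ℕ × ℕ, p ∈ μa ↔ p ∈ ν ∧ p ≠ (a, ν.rowLen a - 1) := by
    intro p
    show p ∈ μa.cells ↔ _
    rw [show μa.cells = ν.cells.erase (a, ν.rowLen a - 1) from rfl, Finset.mem_erase]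
    rw [YoungDiagram.mem_cells]
    tauto
  have hμrow : ∀ i, μa.rowLen i = if i = a then ν.rowLen a - 1 else ν.rowLen i := by
    intro i
    by_cases hia : i = a
    · subst hia
      rw [if_pos rfl]
      apply rowLen_eq_of
      intro j
      rw [hμmem (i, j)]
      have hrp := hrowpos i haR
      constructor
      · rintro ⟨hm, hne⟩
        have h1 := YoungDiagram.mem_iff_lt_rowLen.mp hm
        have h2 : j ≠ ν.rowLen i - 1 := fun he => hne (by rw [he])
        omega
      · intro hj
        refine ⟨YoungDiagram.mem_iff_lt_rowLen.mpr (by omega), fun he => ?_⟩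
        have : j = ν.rowLen i - 1 := congrArg Prod.snd he
        omega
    · rw [if_neg hia]
      apply rowLen_eq_of
      intro j
      rw [hμmem (i, j)]
      constructor
      · rintro ⟨hm, _⟩
        exact YoungDiagram.mem_iff_lt_rowLen.mp hm
      · intro hj
        exact ⟨YoungDiagram.mem_iff_lt_rowLen.mpr hj,
          fun he => hia (congrArg Prod.fst he)⟩
  have hμcol : μa.colLen 0 ≤ R := by
    by_contra hcc
    push_neg at hcc
    have h1 : (R, 0) ∈ μa := YoungDiagram.mem_iff_lt_colLen.mpr (by omega)
    have h2 := ((hμmem _).mp h1).1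
    have := YoungDiagram.mem_iff_lt_colLen.mp h2
    omega
  have hba1 : 1 ≤ bfun ν R a := by
    have := hrowpos a haR
    unfold bfun
    omega
  have hbfun' : ∀ i, bfun μa R i = if i = a then bfun ν R a - 1 else bfun ν R i := by
    intro i
    by_cases hia : i = a
    · subst hia
      rw [if_pos rfl]
      unfold bfun
      rw [hμrow i, if_pos rfl]
      have := hrowpos i haR
      omega
    · rw [if_neg hia]
      unfold bfun
      rw [hμrow i, if_neg hia]
  set b : ℕ → ℚ := fun m => (bfun ν R m : ℚ) with hb
  set b' : ℕ → ℚ := fun m => (bfun μa R m : ℚ) with hb'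
  have hb'a : b' a = b a - 1 := by
    show ((bfun μa R a : ℚ)) = (bfun ν R a : ℚ) - 1
    rw [hbfun' a, if_pos rfl, Nat.cast_sub hba1, Nat.cast_one]
  have hb'o : ∀ i, i ≠ a → b' i = b i := by
    intro i hia
    show ((bfun μa R i : ℚ)) = (bfun ν R i : ℚ)
    rw [hbfun' i, if_neg hia]
  have hstrict : ∀ x y, x < y → y < R → b y < b x := by
    intro x y hxy hy
    show ((bfun ν R y : ℚ)) < ((bfun ν R x : ℚ))
    exact_mod_cast bfun_strict ν R hxy hy
  have hstrict' : ∀ x y, x < y → y < R → b' y < b' x := by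
    intro x y hxy hy
    show ((bfun μa R y : ℚ)) < ((bfun μa R x : ℚ))
    exact_mod_cast bfun_strict μa R hxy hy
  have hHν : (Hprod ν.cells : ℚ) ≠ 0 := by
    exact_mod_cast (Hprod_pos ν.cells).ne'
  have hHμ : (Hprod μa.cells : ℚ) ≠ 0 := by
    exact_mod_cast (Hprod_pos μa.cells).ne'
  have hHeq' := Hprod_beta_q μa R hμcol
  have hHeqν := Hprod_beta_q ν R (le_of_eq hRdef)
  have hfact : (∏ i ∈ Finset.range R, (Nat.factorial (bfun ν R i) : ℚ))
      = b a * ∏ i ∈ Finset.range R, (Nat.factorial (bfun μa R i) : ℚ) := by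
    rw [← Finset.mul_prod_erase _ (fun i => (Nat.factorial (bfun ν R i) : ℚ))
        (Finset.mem_range.mpr haR),
      ← Finset.mul_prod_erase _ (fun i => (Nat.factorial (bfun μa R i) : ℚ))
        (Finset.mem_range.mpr haR)]
    have hoff : ∏ i ∈ (Finset.range R).erase a, (Nat.factorial (bfun μa R i) : ℚ)
        = ∏ i ∈ (Finset.range R).erase a, (Nat.factorial (bfun ν R i) : ℚ) := by
      refine Finset.prod_congr rfl fun i hi => ?_
      rw [hbfun' i, if_neg (Finset.mem_erase.mp hi).1]
    rw [hoff, hbfun' a, if_pos rfl]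
    have hmf : Nat.factorial (bfun ν R a)
        = bfun ν R a * Nat.factorial (bfun ν R a - 1) :=
      (Nat.mul_factorial_pred (by omega)).symm
    rw [hmf]
    push_cast
    ring
  have hres := ratio_lemma R a haR b b' hb'a hb'o hstrict hstrict'
    (Hprod ν.cells : ℚ) (Hprod μa.cells : ℚ)
    (∏ i ∈ Finset.range R, (Nat.factorial (bfun μa R i) : ℚ))
    hHν hHμ (by rw [hHeqν, hfact]) hHeq'
  exact hres

/-- Branching-rule identity: `∑_{λ ∈ ν∖1} 1/H_λ = |ν|/H_ν`. -/
theorem sum_inv_hook_prod_corners (ν : YoungDiagram) (h : ν.cells.Nonempty) :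
    ∑ c ∈ corners ν.cells, (1 : ℚ) / Hprod (ν.cells.erase c)
      = (ν.cells.card : ℚ) / Hprod ν.cells := by
  classical
  set R := ν.colLen 0 with hRdef
  have hR1 : 1 ≤ R := by
    obtain ⟨p, hp⟩ := h
    have hp' : (p.1, p.2) ∈ ν := hp
    have h0 : (0, 0) ∈ ν := ν.up_left_mem (Nat.zero_le _) (Nat.zero_le _) hp'
    have := YoungDiagram.mem_iff_lt_colLen.mp h0
    omega
  have hrowpos : ∀ m, m < R → 1 ≤ ν.rowLen m := by
    intro m hm
    have h0 : (m, 0) ∈ ν := YoungDiagram.mem_iff_lt_colLen.mpr (by omega)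
    have := YoungDiagram.mem_iff_lt_rowLen.mp h0
    omega
  have hrowR : ν.rowLen R = 0 := by
    by_contra hc
    have h1 : (R, 0) ∈ ν := YoungDiagram.mem_iff_lt_rowLen.mpr (by omega)
    have := YoungDiagram.mem_iff_lt_colLen.mp h1
    omega
  set b : ℕ → ℚ := fun m => (bfun ν R m : ℚ) with hb
  set f : ℕ → ℚ := fun a =>
    b a * ∏ i ∈ (Finset.range R).erase a, ((b a - 1 - b i)/(b a - b i)) with hf
  set A := (Finset.range R).filter (fun a => ν.rowLen (a+1) < ν.rowLen a) with hA
  have hstep1 : ∑ c ∈ corners ν.cells, (1:ℚ)/Hprod (ν.cells.erase c)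
      = ∑ a ∈ A, (1:ℚ)/Hprod (ν.cells.erase (a, ν.rowLen a - 1)) := by
    rw [corners_eq ν R hRdef.symm, hA]
    rw [Finset.sum_image]
    intro x hx y hy hxy
    exact congrArg Prod.fst hxy
  have hstep2 : ∀ a ∈ A, (1:ℚ)/Hprod (ν.cells.erase (a, ν.rowLen a - 1))
      = f a / Hprod ν.cells := by
    intro a ha
    rw [hA, Finset.mem_filter, Finset.mem_range] at ha
    exact per_corner ν R hRdef.symm a ha.1 ha.2
  rw [hstep1, Finset.sum_congr rfl hstep2, ← Finset.sum_div]
  have hzero : ∀ a ∈ Finset.range R, a ∉ A → f a = 0 := by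
    intro a ha hnA
    rw [Finset.mem_range] at ha
    rw [hA, Finset.mem_filter] at hnA
    push_neg at hnA
    have hle : ν.rowLen a ≤ ν.rowLen (a+1) := hnA (Finset.mem_range.mpr ha)
    have hanti := ν.rowLen_anti a (a+1) (by omega)
    have heq : ν.rowLen (a+1) = ν.rowLen a := by omega
    have ha1R : a + 1 < R := by
      by_contra hcc
      push_neg at hcc
      have h1 := ν.rowLen_anti R (a+1) (by omega)
      have h2 := hrowpos a ha
      omega
    have hmem : a + 1 ∈ (Finset.range R).erase a := by
      simp only [Finset.mem_erase, Finset.mem_range]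
      omega
    have hfacz : b a - 1 - b (a+1) = 0 := by
      show ((bfun ν R a : ℚ)) - 1 - ((bfun ν R (a+1) : ℚ)) = 0
      have h1 : bfun ν R a = bfun ν R (a+1) + 1 := by
        unfold bfun
        omega
      rw [h1]
      push_cast
      ring
    rw [hf]
    show b a * ∏ i ∈ (Finset.range R).erase a, ((b a - 1 - b i)/(b a - b i)) = 0
    rw [Finset.prod_eq_zero hmem (by rw [hfacz, zero_div]), mul_zero]
  rw [Finset.sum_subset (Finset.filter_subset _ _) hzero]
  have hinj : Set.InjOn b ↑(Finset.range R) := by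
    intro x hx y hy hxy
    simp only [Finset.coe_range, Set.mem_Iio] at hx hy
    have hxy' : (bfun ν R x : ℚ) = (bfun ν R y : ℚ) := hxy
    have hxy'' : bfun ν R x = bfun ν R y := by exact_mod_cast hxy'
    by_contra hne
    rcases Nat.lt_or_ge x y with hlt | hge
    · have := bfun_strict ν R hlt hy
      omega
    · have := bfun_strict ν R (by omega : y < x) hx
      omega
  have hki := key_identity' R hR1 b hinj
  simp only [hf]
  rw [hki]
  congr 1
  have hcard : (ν.cells.card : ℚ) = ∑ i ∈ Finset.range R, (ν.rowLen i : ℚ) := by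
    rw [card_cells_eq ν R (le_of_eq hRdef.symm)]
    push_cast
    rfl
  have hgaussN : (∑ i ∈ Finset.range R, (i:ℚ)) * 2 = R * ((R:ℚ) - 1) := by
    have h1 := Finset.sum_range_id_mul_two R
    have h2 := congrArg (fun n : ℕ => (n:ℚ)) h1
    push_cast at h2
    rw [Nat.cast_sub hR1] at h2
    push_cast at h2
    exact h2
  have hbval : ∀ a ∈ Finset.range R, b a = (ν.rowLen a : ℚ) + ((R:ℚ) - 1 - a) := by
    intro a ha
    rw [Finset.mem_range] at ha
    show ((bfun ν R a : ℚ)) = _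
    unfold bfun
    push_cast [Nat.cast_sub (by omega : a ≤ R - 1), Nat.cast_sub (by omega : 1 ≤ R)]
    ring
  rw [Finset.sum_congr rfl hbval, Finset.sum_add_distrib, ← hcard]
  have : ∑ a ∈ Finset.range R, ((R:ℚ) - 1 - a)
      = ∑ a ∈ Finset.range R, ((R:ℚ) - 1) - ∑ a ∈ Finset.range R, (a:ℚ) := by
    rw [← Finset.sum_sub_distrib]
  rw [this, Finset.sum_const, Finset.card_range, nsmul_eq_mul]
  field_simp
  linarith [hgaussN]

end Aux
end

section
/- For any Young diagram ν with at least one box, |ν| · ∑_{λ ∈ ν∖1} (dim λ) · cr(□_{ν/λ}) = 2 · (dim ν) · ∑_{□∈ν} cr(□), where dim denotes the number of standard Young tableaux of the given shape. -/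
open Finset

/-- The number of standard Young tableaux of a given shape, defined by the
branching recursion: remove the box containing the largest entry, which must be a
removable corner. -/
def dimSYT (s : Finset (ℕ × ℕ)) : ℕ :=
  if h : s = ∅ then 1
  else ∑ c ∈ (corners s).attach, dimSYT (s.erase c.1)
termination_by s.card
decreasing_by
  exact Finset.card_erase_lt_of_mem (Finset.mem_of_mem_filter _ c.2)

namespace TJM

def yg (s : Finset (ℕ × ℕ)) : Prop :=
  ∀ p : ℕ × ℕ, ((p.1, p.2 + 1) ∈ s → p ∈ s) ∧ ((p.1 + 1, p.2) ∈ s → p ∈ s)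

abbrev dZ (s : Finset (ℕ × ℕ)) : ℤ := (dimSYT s : ℤ)

def fJM (s : Finset (ℕ × ℕ)) : ℤ := ∑ c ∈ corners s, dZ (s.erase c) * boxContent c

def Csum (s : Finset (ℕ × ℕ)) : ℤ := ∑ c ∈ s, boxContent c

def lf (c : ℕ × ℕ) : ℕ × ℕ := (c.1, c.2 - 1)
def upc (c : ℕ × ℕ) : ℕ × ℕ := (c.1 - 1, c.2)

def hcond (s : Finset (ℕ × ℕ)) (c : ℕ × ℕ) : Prop := 1 ≤ c.2 ∧ (c.1 + 1, c.2 - 1) ∉ s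
def vcond (s : Finset (ℕ × ℕ)) (c : ℕ × ℕ) : Prop := 1 ≤ c.1 ∧ (c.1 - 1, c.2 + 1) ∉ s

instance (s : Finset (ℕ × ℕ)) (c : ℕ × ℕ) : Decidable (hcond s c) := by unfold hcond; infer_instance
instance (s : Finset (ℕ × ℕ)) (c : ℕ × ℕ) : Decidable (vcond s c) := by unfold vcond; infer_instance

def eH (s : Finset (ℕ × ℕ)) (c : ℕ × ℕ) : ℤ :=
  if hcond s c then dZ ((s.erase c).erase (lf c)) else 0
def eV (s : Finset (ℕ × ℕ)) (c : ℕ × ℕ) : ℤ :=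
  if vcond s c then dZ ((s.erase c).erase (upc c)) else 0

def Ed (s : Finset (ℕ × ℕ)) : ℤ := ∑ c ∈ corners s, (eH s c - eV s c)

lemma mem_corners {s : Finset (ℕ × ℕ)} {c : ℕ × ℕ} :
    c ∈ corners s ↔ c ∈ s ∧ (c.1 + 1, c.2) ∉ s ∧ (c.1, c.2 + 1) ∉ s := by
  simp [corners]

lemma corners_subset {s : Finset (ℕ × ℕ)} {c : ℕ × ℕ} (h : c ∈ corners s) : c ∈ s :=
  (mem_corners.1 h).1

lemma dim_branch {s : Finset (ℕ × ℕ)} (h : s.Nonempty) :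
    dZ s = ∑ c ∈ corners s, dZ (s.erase c) := by
  have : dimSYT s = ∑ c ∈ corners s, dimSYT (s.erase c) := by
    rw [dimSYT, dif_neg (Finset.nonempty_iff_ne_empty.1 h),
      Finset.sum_attach (corners s) (fun c => dimSYT (s.erase c))]
  rw [dZ, this]
  push_cast
  rfl

lemma yg_left {s : Finset (ℕ × ℕ)} (hy : yg s) {c : ℕ × ℕ} (hc : c ∈ s) (h1 : 1 ≤ c.2) :
    (c.1, c.2 - 1) ∈ s := by
  have := (hy (c.1, c.2 - 1)).1
  simp only at this
  apply this
  have : (c.1, c.2 - 1 + 1) = c := by ext <;> simp <;> omega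
  rwa [this]

lemma yg_up {s : Finset (ℕ × ℕ)} (hy : yg s) {c : ℕ × ℕ} (hc : c ∈ s) (h1 : 1 ≤ c.1) :
    (c.1 - 1, c.2) ∈ s := by
  have := (hy (c.1 - 1, c.2)).2
  simp only at this
  apply this
  have : (c.1 - 1 + 1, c.2) = c := by ext <;> simp <;> omega
  rwa [this]

lemma yg_erase {s : Finset (ℕ × ℕ)} (hy : yg s) {c : ℕ × ℕ} (hc : c ∈ corners s) :
    yg (s.erase c) := by
  obtain ⟨hcs, hdn, hr⟩ := mem_corners.1 hc
  intro p
  constructor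
  · intro hp
    rw [Finset.mem_erase] at hp ⊢
    refine ⟨?_, (hy p).1 hp.2⟩
    rintro rfl
    exact hr hp.2
  · intro hp
    rw [Finset.mem_erase] at hp ⊢
    refine ⟨?_, (hy p).2 hp.2⟩
    rintro rfl
    exact hdn hp.2

lemma lf_ne {c : ℕ × ℕ} (h1 : 1 ≤ c.2) : lf c ≠ c := by
  simp [lf, Prod.ext_iff]; omega

lemma upc_ne {c : ℕ × ℕ} (h1 : 1 ≤ c.1) : upc c ≠ c := by
  simp [upc, Prod.ext_iff]; omega

lemma lf_mem {s : Finset (ℕ × ℕ)} (hy : yg s) {c : ℕ × ℕ} (hc : c ∈ s) (h1 : 1 ≤ c.2) :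
    lf c ∈ s := yg_left hy hc h1

lemma upc_mem {s : Finset (ℕ × ℕ)} (hy : yg s) {c : ℕ × ℕ} (hc : c ∈ s) (h1 : 1 ≤ c.1) :
    upc c ∈ s := yg_up hy hc h1

lemma lf_not_corner {s : Finset (ℕ × ℕ)} {c : ℕ × ℕ} (hc : c ∈ s) (h1 : 1 ≤ c.2) :
    lf c ∉ corners s := by
  rw [mem_corners]
  rintro ⟨-, -, hr⟩
  apply hr
  have : ((lf c).1, (lf c).2 + 1) = c := by simp [lf, Prod.ext_iff]; omega
  rwa [this]

lemma upc_not_corner {s : Finset (ℕ × ℕ)} {c : ℕ × ℕ} (hc : c ∈ s) (h1 : 1 ≤ c.1) :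
    upc c ∉ corners s := by
  rw [mem_corners]
  rintro ⟨-, hdn, -⟩
  apply hdn
  have : ((upc c).1 + 1, (upc c).2) = c := by simp [upc, Prod.ext_iff]; omega
  rwa [this]

lemma mem_corners_erase {s : Finset (ℕ × ℕ)} (hy : yg s) {c : ℕ × ℕ} (hc : c ∈ corners s)
    (x : ℕ × ℕ) :
    x ∈ corners (s.erase c) ↔
      (x ∈ (corners s).erase c) ∨ (hcond s c ∧ x = lf c) ∨ (vcond s c ∧ x = upc c) := by
  obtain ⟨hcs, hdn, hr⟩ := mem_corners.1 hc
  constructor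
  · intro hx
    obtain ⟨hxm, hxdn, hxr⟩ := mem_corners.1 hx
    rw [Finset.mem_erase] at hxm hxdn hxr
    push_neg at hxdn hxr
    obtain ⟨hxne, hxs⟩ := hxm
    by_cases hd : (x.1 + 1, x.2) ∈ s
    · -- then (x.1+1,x.2) = c, x = upc c
      have hec : (x.1 + 1, x.2) = c := by
        by_contra hne
        exact (hxdn hne) hd
      right; right
      constructor
      · constructor
        · have : c.1 = x.1 + 1 := by rw [← hec]
          omega
        · intro hm
          have hxr1 : (x.1, x.2 + 1) ∉ s := by
            intro hmm
            have hne : (x.1, x.2 + 1) ≠ c := by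
              rw [← hec]; simp [Prod.ext_iff]
            exact (hxr hne) hmm
          apply hxr1
          have : (c.1 - 1, c.2 + 1) = (x.1, x.2 + 1) := by
            rw [← hec]; simp
          rwa [this] at hm
      · rw [← hec]; simp [upc]
    · by_cases hrr : (x.1, x.2 + 1) ∈ s
      · have hec : (x.1, x.2 + 1) = c := by
          by_contra hne
          exact (hxr hne) hrr
        right; left
        constructor
        · constructor
          · have : c.2 = x.2 + 1 := by rw [← hec]
            omega
          · intro hm
            apply hxdn
            · rw [← hec]; simp [Prod.ext_iff]
            · have : (c.1 + 1, c.2 - 1) = (x.1 + 1, x.2) := by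
                rw [← hec]; simp
              rwa [this] at hm
        · rw [← hec]; simp [lf]
      · left
        rw [Finset.mem_erase, mem_corners]
        exact ⟨hxne, hxs, hd, hrr⟩
  · rintro (hx | ⟨⟨h1, h2⟩, rfl⟩ | ⟨⟨h1, h2⟩, rfl⟩)
    · rw [Finset.mem_erase] at hx
      obtain ⟨hne, hxc⟩ := hx
      obtain ⟨hxs, hxdn, hxr⟩ := mem_corners.1 hxc
      rw [mem_corners, Finset.mem_erase]
      exact ⟨⟨hne, hxs⟩, fun h => hxdn (Finset.mem_erase.1 h).2,
        fun h => hxr (Finset.mem_erase.1 h).2⟩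
    · rw [mem_corners]
      have e1 : ((lf c).1 + 1, (lf c).2) = (c.1 + 1, c.2 - 1) := by simp [lf]
      have e2 : ((lf c).1, (lf c).2 + 1) = c := by simp [lf, Prod.ext_iff]; omega
      refine ⟨Finset.mem_erase.2 ⟨lf_ne h1, lf_mem hy hcs h1⟩, ?_, ?_⟩
      · rw [e1]; intro hm; exact h2 (Finset.mem_erase.1 hm).2
      · rw [e2]; exact Finset.notMem_erase c s
    · rw [mem_corners]
      have e1 : ((upc c).1 + 1, (upc c).2) = c := by simp [upc, Prod.ext_iff]; omega
      have e2 : ((upc c).1, (upc c).2 + 1) = (c.1 - 1, c.2 + 1) := by simp [upc]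
      refine ⟨Finset.mem_erase.2 ⟨upc_ne h1, upc_mem hy hcs h1⟩, ?_, ?_⟩
      · rw [e1]; exact Finset.notMem_erase c s
      · rw [e2]; intro hm; exact h2 (Finset.mem_erase.1 hm).2

lemma corners_erase {s : Finset (ℕ × ℕ)} (hy : yg s) {c : ℕ × ℕ} (hc : c ∈ corners s) :
    corners (s.erase c) =
      ((corners s).erase c) ∪
        ((if hcond s c then {lf c} else ∅) ∪ (if vcond s c then {upc c} else ∅)) := by
  ext x
  rw [mem_corners_erase hy hc x]
  simp only [Finset.mem_union]
  constructor
  · rintro (h | ⟨h1, rfl⟩ | ⟨h1, rfl⟩)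
    · exact Or.inl h
    · right; left; rw [if_pos h1]; simp
    · right; right; rw [if_pos h1]; simp
  · rintro (h | h | h)
    · exact Or.inl h
    · right; left
      by_cases hh : hcond s c
      · rw [if_pos hh] at h; simp at h; exact ⟨hh, h⟩
      · rw [if_neg hh] at h; simp at h
    · right; right
      by_cases hh : vcond s c
      · rw [if_pos hh] at h; simp at h; exact ⟨hh, h⟩
      · rw [if_neg hh] at h; simp at h

lemma sum_corners_erase {s : Finset (ℕ × ℕ)} (hy : yg s) {c : ℕ × ℕ} (hc : c ∈ corners s)
    (g : ℕ × ℕ → ℤ) :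
    ∑ x ∈ corners (s.erase c), g x =
      (∑ x ∈ (corners s).erase c, g x) +
        ((if hcond s c then g (lf c) else 0) + (if vcond s c then g (upc c) else 0)) := by
  obtain ⟨hcs, hdn, hr⟩ := mem_corners.1 hc
  rw [corners_erase hy hc]
  rw [Finset.sum_union, Finset.sum_union]
  · congr 1
    congr 1 <;> (split_ifs with h <;> simp)
  · -- Disjoint {lf c}-if {upc c}-if
    split_ifs with h1 h2
    · rw [Finset.disjoint_singleton]
      obtain ⟨h21, -⟩ := h2
      intro he
      have hfst := congrArg Prod.fst he
      simp only [lf, upc] at hfst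
      omega
    · simp
    · simp
    · simp
  · -- Disjoint (erase) (union)
    rw [Finset.disjoint_left]
    intro a ha hb
    rw [Finset.mem_union] at hb
    have ha' := Finset.mem_of_mem_erase ha
    rcases hb with hb | hb
    · by_cases h1 : hcond s c
      · rw [if_pos h1] at hb; simp at hb; subst hb
        exact lf_not_corner hcs h1.1 ha'
      · rw [if_neg h1] at hb; simp at hb
    · by_cases h1 : vcond s c
      · rw [if_pos h1] at hb; simp at hb; subst hb
        exact upc_not_corner hcs h1.1 ha'
      · rw [if_neg h1] at hb; simp at hb

lemma lf_corner_erase {s : Finset (ℕ × ℕ)} (hy : yg s) {c : ℕ × ℕ} (hc : c ∈ corners s)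
    (hh : hcond s c) : lf c ∈ corners (s.erase c) := by
  rw [mem_corners_erase hy hc]
  exact Or.inr (Or.inl ⟨hh, rfl⟩)

lemma not_vcond_erase_lf {s : Finset (ℕ × ℕ)} (hy : yg s) {c : ℕ × ℕ} (hc : c ∈ corners s)
    (hh : hcond s c) : ¬ vcond (s.erase c) (lf c) := by
  obtain ⟨hh1, -⟩ := hh
  rintro ⟨h1, h2⟩
  apply h2
  have e : ((lf c).1 - 1, (lf c).2 + 1) = upc c := by
    simp [lf, upc, Prod.ext_iff]; omega
  rw [e, Finset.mem_erase]
  have h1' : 1 ≤ c.1 := by simpa [lf] using h1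
  exact ⟨upc_ne h1', upc_mem hy (corners_subset hc) h1'⟩

lemma not_hcond_erase_upc {s : Finset (ℕ × ℕ)} (hy : yg s) {c : ℕ × ℕ} (hc : c ∈ corners s)
    (hv : vcond s c) : ¬ hcond (s.erase c) (upc c) := by
  obtain ⟨hv1, -⟩ := hv
  rintro ⟨h1, h2⟩
  apply h2
  have h1' : 1 ≤ c.2 := by simpa [upc] using h1
  have e : ((upc c).1 + 1, (upc c).2 - 1) = lf c := by
    simp [lf, upc, Prod.ext_iff]; omega
  rw [e, Finset.mem_erase]
  exact ⟨lf_ne h1', lf_mem hy (corners_subset hc) h1'⟩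

lemma eH_erase {s : Finset (ℕ × ℕ)} {c x : ℕ × ℕ} (hcs : c ∈ s) :
    eH (s.erase c) x =
      (if hcond s x then dZ (((s.erase c).erase x).erase (lf x)) else 0) +
        (if 1 ≤ x.2 ∧ (x.1 + 1, x.2 - 1) = c then dZ (((s.erase c).erase x).erase (lf x)) else 0) := by
  unfold eH
  by_cases h1 : 1 ≤ x.2
  · by_cases hd : (x.1 + 1, x.2 - 1) = c
    · have hA : (x.1 + 1, x.2 - 1) ∉ s.erase c := by rw [hd]; exact Finset.notMem_erase c s
      have hB : ¬(1 ≤ x.2 ∧ (x.1 + 1, x.2 - 1) ∉ s) := by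
        rintro ⟨-, h2⟩; rw [hd] at h2; exact h2 hcs
      rw [if_pos (show hcond (s.erase c) x from ⟨h1, hA⟩), if_neg (show ¬ hcond s x from hB), if_pos ⟨h1, hd⟩, zero_add]
    · have hAB : ((x.1 + 1, x.2 - 1) ∉ s.erase c) ↔ ((x.1 + 1, x.2 - 1) ∉ s) := by
        rw [Finset.mem_erase]; tauto
      have hC : ¬(1 ≤ x.2 ∧ (x.1 + 1, x.2 - 1) = c) := by rintro ⟨-, h⟩; exact hd h
      rw [if_neg hC, add_zero]
      congr 1
      rw [eq_iff_iff]
      exact and_congr_right fun _ => hAB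
  · have h1' : ∀ P : Prop, ¬(1 ≤ x.2 ∧ P) := fun P h => h1 h.1
    rw [if_neg (show ¬ hcond (s.erase c) x from h1' _), if_neg (show ¬ hcond s x from h1' _), if_neg (h1' _), add_zero]

lemma eV_erase {s : Finset (ℕ × ℕ)} {c x : ℕ × ℕ} (hcs : c ∈ s) :
    eV (s.erase c) x =
      (if vcond s x then dZ (((s.erase c).erase x).erase (upc x)) else 0) +
        (if 1 ≤ x.1 ∧ (x.1 - 1, x.2 + 1) = c then dZ (((s.erase c).erase x).erase (upc x)) else 0) := by
  unfold eV
  by_cases h1 : 1 ≤ x.1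
  · by_cases hd : (x.1 - 1, x.2 + 1) = c
    · have hA : (x.1 - 1, x.2 + 1) ∉ s.erase c := by rw [hd]; exact Finset.notMem_erase c s
      have hB : ¬(1 ≤ x.1 ∧ (x.1 - 1, x.2 + 1) ∉ s) := by
        rintro ⟨-, h2⟩; rw [hd] at h2; exact h2 hcs
      rw [if_pos (show vcond (s.erase c) x from ⟨h1, hA⟩), if_neg (show ¬ vcond s x from hB), if_pos ⟨h1, hd⟩, zero_add]
    · have hAB : ((x.1 - 1, x.2 + 1) ∉ s.erase c) ↔ ((x.1 - 1, x.2 + 1) ∉ s) := by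
        rw [Finset.mem_erase]; tauto
      have hC : ¬(1 ≤ x.1 ∧ (x.1 - 1, x.2 + 1) = c) := by rintro ⟨-, h⟩; exact hd h
      rw [if_neg hC, add_zero]
      congr 1
      rw [eq_iff_iff]
      exact and_congr_right fun _ => hAB
  · have h1' : ∀ P : Prop, ¬(1 ≤ x.1 ∧ P) := fun P h => h1 h.1
    rw [if_neg (show ¬ vcond (s.erase c) x from h1' _), if_neg (show ¬ vcond s x from h1' _), if_neg (h1' _), add_zero]

lemma erase_nonempty {s : Finset (ℕ × ℕ)} (h2 : 2 ≤ s.card) {c : ℕ × ℕ} (hc : c ∈ corners s) :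
    (s.erase c).Nonempty := by
  rw [← Finset.card_pos, Finset.card_erase_of_mem (corners_subset hc)]
  omega

lemma corners_swap {s : Finset (ℕ × ℕ)} :
    ∀ c x : ℕ × ℕ, c ∈ corners s ∧ x ∈ (corners s).erase c ↔
      c ∈ (corners s).erase x ∧ x ∈ corners s := by
  intro c x
  simp only [Finset.mem_erase]
  constructor
  · rintro ⟨h1, h2, h3⟩; exact ⟨⟨fun h => h2 h.symm, h1⟩, h3⟩
  · rintro ⟨⟨h1, h2⟩, h3⟩; exact ⟨h2, fun h => h1 h.symm, h3⟩

lemma f_rec {s : Finset (ℕ × ℕ)} (hy : yg s) (h2 : 2 ≤ s.card) :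
    fJM s = Ed s + ∑ c ∈ corners s, fJM (s.erase c) := by
  have hfs : fJM s = (∑ c ∈ corners s, ∑ x ∈ (corners s).erase c,
        dZ ((s.erase c).erase x) * boxContent c)
      + ((∑ c ∈ corners s, if hcond s c then dZ ((s.erase c).erase (lf c)) * boxContent c else 0)
       + (∑ c ∈ corners s, if vcond s c then dZ ((s.erase c).erase (upc c)) * boxContent c else 0)) := by
    rw [← Finset.sum_add_distrib, ← Finset.sum_add_distrib]
    refine Finset.sum_congr rfl fun c hc => ?_
    rw [dim_branch (erase_nonempty h2 hc), Finset.sum_mul,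
      sum_corners_erase hy hc (fun x => dZ ((s.erase c).erase x) * boxContent c)]
  have hfe : ∑ c ∈ corners s, fJM (s.erase c) = (∑ c ∈ corners s, ∑ x ∈ (corners s).erase c,
        dZ ((s.erase c).erase x) * boxContent x)
      + ((∑ c ∈ corners s, if hcond s c then dZ ((s.erase c).erase (lf c)) * boxContent (lf c) else 0)
       + (∑ c ∈ corners s, if vcond s c then dZ ((s.erase c).erase (upc c)) * boxContent (upc c) else 0)) := by
    rw [← Finset.sum_add_distrib, ← Finset.sum_add_distrib]
    refine Finset.sum_congr rfl fun c hc => ?_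
    unfold fJM
    rw [sum_corners_erase hy hc (fun x => dZ ((s.erase c).erase x) * boxContent x)]
  have hswap : (∑ c ∈ corners s, ∑ x ∈ (corners s).erase c,
        dZ ((s.erase c).erase x) * boxContent c)
      = ∑ c ∈ corners s, ∑ x ∈ (corners s).erase c,
        dZ ((s.erase c).erase x) * boxContent x := by
    rw [Finset.sum_comm' corners_swap]
    refine Finset.sum_congr rfl fun x hx => Finset.sum_congr rfl fun c hc => ?_
    rw [Finset.erase_right_comm]
  have hH : (∑ c ∈ corners s, if hcond s c then dZ ((s.erase c).erase (lf c)) * boxContent c else 0)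
      - (∑ c ∈ corners s, if hcond s c then dZ ((s.erase c).erase (lf c)) * boxContent (lf c) else 0)
      = ∑ c ∈ corners s, eH s c := by
    rw [← Finset.sum_sub_distrib]
    refine Finset.sum_congr rfl fun c hc => ?_
    unfold eH
    split_ifs with h
    · have hb : boxContent c - boxContent (lf c) = 1 := by
        obtain ⟨h1, -⟩ := h
        simp only [boxContent, lf]
        omega
      rw [← mul_sub, hb, mul_one]
    · ring
  have hV : (∑ c ∈ corners s, if vcond s c then dZ ((s.erase c).erase (upc c)) * boxContent c else 0)
      - (∑ c ∈ corners s, if vcond s c then dZ ((s.erase c).erase (upc c)) * boxContent (upc c) else 0)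
      = - ∑ c ∈ corners s, eV s c := by
    rw [← Finset.sum_sub_distrib, ← Finset.sum_neg_distrib]
    refine Finset.sum_congr rfl fun c hc => ?_
    unfold eV
    split_ifs with h
    · have hb : boxContent c - boxContent (upc c) = -1 := by
        obtain ⟨h1, -⟩ := h
        simp only [boxContent, upc]
        omega
      rw [← mul_sub, hb]
      ring
    · ring
  have hEd : Ed s = (∑ c ∈ corners s, eH s c) - (∑ c ∈ corners s, eV s c) := by
    unfold Ed
    rw [Finset.sum_sub_distrib]
  rw [hfs, hfe, hEd, ← hswap] at *
  linarith [hH, hV]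

lemma upc_corner_erase {s : Finset (ℕ × ℕ)} (hy : yg s) {c : ℕ × ℕ} (hc : c ∈ corners s)
    (hv : vcond s c) : upc c ∈ corners (s.erase c) := by
  rw [mem_corners_erase hy hc]
  exact Or.inr (Or.inr ⟨hv, rfl⟩)

lemma erase2_nonempty {s : Finset (ℕ × ℕ)} (h3 : 3 ≤ s.card) {c b : ℕ × ℕ}
    (hc : c ∈ s) (hb : b ∈ s.erase c) : ((s.erase c).erase b).Nonempty := by
  rw [← Finset.card_pos, Finset.card_erase_of_mem hb, Finset.card_erase_of_mem hc]
  omega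

lemma eH_expand {s : Finset (ℕ × ℕ)} (hy : yg s) (h3 : 3 ≤ s.card) {c : ℕ × ℕ}
    (hc : c ∈ corners s) :
    eH s c = (∑ y ∈ (corners s).erase c, if hcond s c then dZ (((s.erase c).erase (lf c)).erase y) else 0)
      + (if hcond s c ∧ vcond s c then dZ (((s.erase c).erase (lf c)).erase (upc c)) else 0)
      + (if hcond s c ∧ hcond (s.erase c) (lf c) then dZ (((s.erase c).erase (lf c)).erase (lf (lf c))) else 0) := by
  by_cases hh : hcond s c
  · have hlfm : lf c ∈ s.erase c :=
      Finset.mem_erase.2 ⟨lf_ne hh.1, lf_mem hy (corners_subset hc) hh.1⟩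
    have hne : ((s.erase c).erase (lf c)).Nonempty :=
      erase2_nonempty h3 (corners_subset hc) hlfm
    rw [eH, if_pos hh, dim_branch hne,
      sum_corners_erase (yg_erase hy hc) (lf_corner_erase hy hc hh)
        (fun y => dZ (((s.erase c).erase (lf c)).erase y)),
      Finset.sum_erase_eq_sub (lf_corner_erase hy hc hh),
      sum_corners_erase hy hc (fun y => dZ (((s.erase c).erase (lf c)).erase y)),
      if_pos hh, if_neg (not_vcond_erase_lf hy hc hh)]
    simp only [if_pos hh]
    have e1 : (if hcond s c ∧ vcond s c then dZ (((s.erase c).erase (lf c)).erase (upc c)) else 0)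
        = (if vcond s c then dZ (((s.erase c).erase (lf c)).erase (upc c)) else 0) := by
      by_cases hv : vcond s c <;> simp [hh, hv]
    have e2 : (if hcond s c ∧ hcond (s.erase c) (lf c) then dZ (((s.erase c).erase (lf c)).erase (lf (lf c))) else 0)
        = (if hcond (s.erase c) (lf c) then dZ (((s.erase c).erase (lf c)).erase (lf (lf c))) else 0) := by
      by_cases hv : hcond (s.erase c) (lf c) <;> simp [hh, hv]
    rw [e1, e2]
    ring
  · simp [eH, hh]

lemma eV_expand {s : Finset (ℕ × ℕ)} (hy : yg s) (h3 : 3 ≤ s.card) {c : ℕ × ℕ}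
    (hc : c ∈ corners s) :
    eV s c = (∑ y ∈ (corners s).erase c, if vcond s c then dZ (((s.erase c).erase (upc c)).erase y) else 0)
      + (if hcond s c ∧ vcond s c then dZ (((s.erase c).erase (upc c)).erase (lf c)) else 0)
      + (if vcond s c ∧ vcond (s.erase c) (upc c) then dZ (((s.erase c).erase (upc c)).erase (upc (upc c))) else 0) := by
  by_cases hh : vcond s c
  · have hupm : upc c ∈ s.erase c :=
      Finset.mem_erase.2 ⟨upc_ne hh.1, upc_mem hy (corners_subset hc) hh.1⟩
    have hne : ((s.erase c).erase (upc c)).Nonempty :=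
      erase2_nonempty h3 (corners_subset hc) hupm
    rw [eV, if_pos hh, dim_branch hne,
      sum_corners_erase (yg_erase hy hc) (upc_corner_erase hy hc hh)
        (fun y => dZ (((s.erase c).erase (upc c)).erase y)),
      Finset.sum_erase_eq_sub (upc_corner_erase hy hc hh),
      sum_corners_erase hy hc (fun y => dZ (((s.erase c).erase (upc c)).erase y)),
      if_pos hh, if_neg (not_hcond_erase_upc hy hc hh)]
    simp only [if_pos hh]
    have e1 : (if hcond s c ∧ vcond s c then dZ (((s.erase c).erase (upc c)).erase (lf c)) else 0)
        = (if hcond s c then dZ (((s.erase c).erase (upc c)).erase (lf c)) else 0) := by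
      by_cases hv : hcond s c <;> simp [hh, hv]
    have e2 : (if vcond s c ∧ vcond (s.erase c) (upc c) then dZ (((s.erase c).erase (upc c)).erase (upc (upc c))) else 0)
        = (if vcond (s.erase c) (upc c) then dZ (((s.erase c).erase (upc c)).erase (upc (upc c))) else 0) := by
      by_cases hv : vcond (s.erase c) (upc c) <;> simp [hh, hv]
    rw [e1, e2]
    ring
  · simp [eV, hh]

lemma Ed_erase_expand {s : Finset (ℕ × ℕ)} (hy : yg s) {c : ℕ × ℕ} (hc : c ∈ corners s) :
    Ed (s.erase c) =
      (∑ x ∈ (corners s).erase c,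
        ((if hcond s x then dZ (((s.erase c).erase x).erase (lf x)) else 0)
          - (if vcond s x then dZ (((s.erase c).erase x).erase (upc x)) else 0)))
      + (∑ x ∈ (corners s).erase c,
        ((if 1 ≤ x.2 ∧ (x.1 + 1, x.2 - 1) = c then dZ (((s.erase c).erase x).erase (lf x)) else 0)
          - (if 1 ≤ x.1 ∧ (x.1 - 1, x.2 + 1) = c then dZ (((s.erase c).erase x).erase (upc x)) else 0)))
      + ((if hcond s c ∧ hcond (s.erase c) (lf c) then dZ (((s.erase c).erase (lf c)).erase (lf (lf c))) else 0)
        - (if vcond s c ∧ vcond (s.erase c) (upc c) then dZ (((s.erase c).erase (upc c)).erase (upc (upc c))) else 0)) := by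
  have hcs := corners_subset hc
  unfold Ed
  rw [sum_corners_erase hy hc (fun x => eH (s.erase c) x - eV (s.erase c) x)]
  have hmain : ∑ x ∈ (corners s).erase c, (eH (s.erase c) x - eV (s.erase c) x)
      = (∑ x ∈ (corners s).erase c,
          ((if hcond s x then dZ (((s.erase c).erase x).erase (lf x)) else 0)
            - (if vcond s x then dZ (((s.erase c).erase x).erase (upc x)) else 0)))
        + (∑ x ∈ (corners s).erase c,
          ((if 1 ≤ x.2 ∧ (x.1 + 1, x.2 - 1) = c then dZ (((s.erase c).erase x).erase (lf x)) else 0)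
            - (if 1 ≤ x.1 ∧ (x.1 - 1, x.2 + 1) = c then dZ (((s.erase c).erase x).erase (upc x)) else 0))) := by
    rw [← Finset.sum_add_distrib]
    refine Finset.sum_congr rfl fun x hx => ?_
    rw [eH_erase hcs, eV_erase hcs]
    ring
  have hsp1 : (if hcond s c then eH (s.erase c) (lf c) - eV (s.erase c) (lf c) else 0)
      = (if hcond s c ∧ hcond (s.erase c) (lf c) then dZ (((s.erase c).erase (lf c)).erase (lf (lf c))) else 0) := by
    by_cases hh : hcond s c
    · rw [if_pos hh, eV, if_neg (not_vcond_erase_lf hy hc hh), sub_zero, eH]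
      by_cases hg : hcond (s.erase c) (lf c) <;> simp [hh, hg]
    · rw [if_neg hh, if_neg (fun hx => hh hx.1)]
  have hsp2 : (if vcond s c then eH (s.erase c) (upc c) - eV (s.erase c) (upc c) else 0)
      = - (if vcond s c ∧ vcond (s.erase c) (upc c) then dZ (((s.erase c).erase (upc c)).erase (upc (upc c))) else 0) := by
    by_cases hh : vcond s c
    · rw [if_pos hh, eH, if_neg (not_hcond_erase_upc hy hc hh), zero_sub, eV]
      by_cases hg : vcond (s.erase c) (upc c) <;> simp [hh, hg]
    · rw [if_neg hh, if_neg (fun hx => hh hx.1), neg_zero]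
  rw [hmain, hsp1, hsp2]
  ring

lemma sum_ite_and_eq {T : Finset (ℕ × ℕ)} {P : Prop} [Decidable P] (a : ℕ × ℕ)
    (F : ℕ × ℕ → ℤ) :
    ∑ c ∈ T, (if P ∧ a = c then F c else 0) = if P ∧ a ∈ T then F a else 0 := by
  by_cases hP : P
  · simp only [hP, true_and]
    exact Finset.sum_ite_eq T a F
  · simp [hP]

lemma dl_mem_erase_iff {s : Finset (ℕ × ℕ)} {x : ℕ × ℕ} :
    ((x.1 + 1, x.2 - 1) ∈ (corners s).erase x) ↔ (x.1 + 1, x.2 - 1) ∈ corners s := by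
  rw [Finset.mem_erase, and_iff_right_iff_imp]
  intro _
  simp [Prod.ext_iff]

lemma ur_mem_erase_iff {s : Finset (ℕ × ℕ)} {x : ℕ × ℕ} :
    ((x.1 - 1, x.2 + 1) ∈ (corners s).erase x) ↔ (x.1 - 1, x.2 + 1) ∈ corners s := by
  rw [Finset.mem_erase, and_iff_right_iff_imp]
  intro _
  simp [Prod.ext_iff]

lemma sumB_zero {s : Finset (ℕ × ℕ)} (hy : yg s) :
    ∑ c ∈ corners s, ∑ x ∈ (corners s).erase c,
      ((if 1 ≤ x.2 ∧ (x.1 + 1, x.2 - 1) = c then dZ (((s.erase c).erase x).erase (lf x)) else 0)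
        - (if 1 ≤ x.1 ∧ (x.1 - 1, x.2 + 1) = c then dZ (((s.erase c).erase x).erase (upc x)) else 0)) = 0 := by
  rw [Finset.sum_comm' corners_swap]
  have heval : ∀ x ∈ corners s,
      (∑ c ∈ (corners s).erase x,
        ((if 1 ≤ x.2 ∧ (x.1 + 1, x.2 - 1) = c then dZ (((s.erase c).erase x).erase (lf x)) else 0)
          - (if 1 ≤ x.1 ∧ (x.1 - 1, x.2 + 1) = c then dZ (((s.erase c).erase x).erase (upc x)) else 0)))
      = (if 1 ≤ x.2 ∧ (x.1 + 1, x.2 - 1) ∈ corners s then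
            dZ (((s.erase (x.1 + 1, x.2 - 1)).erase x).erase (lf x)) else 0)
        - (if 1 ≤ x.1 ∧ (x.1 - 1, x.2 + 1) ∈ corners s then
            dZ (((s.erase (x.1 - 1, x.2 + 1)).erase x).erase (upc x)) else 0) := by
    intro x hx
    rw [Finset.sum_sub_distrib,
      sum_ite_and_eq (x.1 + 1, x.2 - 1) (fun c => dZ (((s.erase c).erase x).erase (lf x))),
      sum_ite_and_eq (x.1 - 1, x.2 + 1) (fun c => dZ (((s.erase c).erase x).erase (upc x)))]
    simp only [dl_mem_erase_iff, ur_mem_erase_iff]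
  rw [Finset.sum_congr rfl heval, Finset.sum_sub_distrib, sub_eq_zero,
    ← Finset.sum_filter, ← Finset.sum_filter]
  refine Finset.sum_nbij' (fun x => (x.1 + 1, x.2 - 1)) (fun x => (x.1 - 1, x.2 + 1))
    ?_ ?_ ?_ ?_ ?_
  · intro a ha
    rw [Finset.mem_filter] at ha ⊢
    obtain ⟨hac, h1, h2⟩ := ha
    refine ⟨h2, by simp, ?_⟩
    have : ((a.1 + 1 : ℕ) - 1, (a.2 - 1) + 1) = a := by simp [Prod.ext_iff]; omega
    rw [this]
    exact hac
  · intro a ha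
    rw [Finset.mem_filter] at ha ⊢
    obtain ⟨hac, h1, h2⟩ := ha
    refine ⟨h2, by simp, ?_⟩
    have : ((a.1 - 1 : ℕ) + 1, (a.2 + 1) - 1) = a := by simp [Prod.ext_iff]; omega
    rw [this]
    exact hac
  · intro a ha
    rw [Finset.mem_filter] at ha
    simp [Prod.ext_iff]
    omega
  · intro a ha
    rw [Finset.mem_filter] at ha
    simp [Prod.ext_iff]
    omega
  · intro a ha
    rw [Finset.mem_filter] at ha
    obtain ⟨hac, h1, h2⟩ := ha
    have e1 : ((a.1 + 1 : ℕ) - 1, (a.2 - 1) + 1) = a := by simp [Prod.ext_iff]; omega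
    have e2 : upc (a.1 + 1, a.2 - 1) = lf a := by simp [upc, lf]
    simp only [e1, e2]
    have hswap2 : (s.erase (a.1 + 1, a.2 - 1)).erase a = (s.erase a).erase (a.1 + 1, a.2 - 1) :=
      Finset.erase_right_comm
    rw [hswap2]

lemma sumA_swap {s : Finset (ℕ × ℕ)} :
    (∑ c ∈ corners s, ∑ y ∈ (corners s).erase c,
      ((if hcond s c then dZ (((s.erase c).erase (lf c)).erase y) else 0)
        - (if vcond s c then dZ (((s.erase c).erase (upc c)).erase y) else 0)))
    = ∑ c ∈ corners s, ∑ x ∈ (corners s).erase c,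
      ((if hcond s x then dZ (((s.erase c).erase x).erase (lf x)) else 0)
        - (if vcond s x then dZ (((s.erase c).erase x).erase (upc x)) else 0)) := by
  rw [Finset.sum_comm' corners_swap]
  refine Finset.sum_congr rfl fun c hc => Finset.sum_congr rfl fun x hx => ?_
  have e1 : ((s.erase x).erase (lf x)).erase c = ((s.erase c).erase x).erase (lf x) := by
    rw [Finset.erase_right_comm (s := s.erase x) (a := lf x) (b := c)]
    have : (s.erase x).erase c = (s.erase c).erase x := Finset.erase_right_comm
    rw [this]
  have e2 : ((s.erase x).erase (upc x)).erase c = ((s.erase c).erase x).erase (upc x) := by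
    rw [Finset.erase_right_comm (s := s.erase x) (a := upc x) (b := c)]
    have : (s.erase x).erase c = (s.erase c).erase x := Finset.erase_right_comm
    rw [this]
  rw [e1, e2]

lemma Ed_rec {s : Finset (ℕ × ℕ)} (hy : yg s) (h3 : 3 ≤ s.card) :
    Ed s = ∑ c ∈ corners s, Ed (s.erase c) := by
  have hL : Ed s = (∑ c ∈ corners s, ∑ y ∈ (corners s).erase c,
        ((if hcond s c then dZ (((s.erase c).erase (lf c)).erase y) else 0)
          - (if vcond s c then dZ (((s.erase c).erase (upc c)).erase y) else 0)))
      + ∑ c ∈ corners s,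
        ((if hcond s c ∧ hcond (s.erase c) (lf c) then dZ (((s.erase c).erase (lf c)).erase (lf (lf c))) else 0)
          - (if vcond s c ∧ vcond (s.erase c) (upc c) then dZ (((s.erase c).erase (upc c)).erase (upc (upc c))) else 0)) := by
    unfold Ed
    rw [← Finset.sum_add_distrib]
    refine Finset.sum_congr rfl fun c hc => ?_
    have hM : (if hcond s c ∧ vcond s c then dZ (((s.erase c).erase (lf c)).erase (upc c)) else 0)
        = (if hcond s c ∧ vcond s c then dZ (((s.erase c).erase (upc c)).erase (lf c)) else 0) := by
      split_ifs with h
      · have : ((s.erase c).erase (lf c)).erase (upc c)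
            = ((s.erase c).erase (upc c)).erase (lf c) := Finset.erase_right_comm
        rw [this]
      · rfl
    rw [eH_expand hy h3 hc, eV_expand hy h3 hc, hM, Finset.sum_sub_distrib]
    ring
  have hR : ∑ c ∈ corners s, Ed (s.erase c) =
      (∑ c ∈ corners s, ∑ x ∈ (corners s).erase c,
        ((if hcond s x then dZ (((s.erase c).erase x).erase (lf x)) else 0)
          - (if vcond s x then dZ (((s.erase c).erase x).erase (upc x)) else 0)))
      + (∑ c ∈ corners s, ∑ x ∈ (corners s).erase c,
        ((if 1 ≤ x.2 ∧ (x.1 + 1, x.2 - 1) = c then dZ (((s.erase c).erase x).erase (lf x)) else 0)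
          - (if 1 ≤ x.1 ∧ (x.1 - 1, x.2 + 1) = c then dZ (((s.erase c).erase x).erase (upc x)) else 0)))
      + ∑ c ∈ corners s,
        ((if hcond s c ∧ hcond (s.erase c) (lf c) then dZ (((s.erase c).erase (lf c)).erase (lf (lf c))) else 0)
          - (if vcond s c ∧ vcond (s.erase c) (upc c) then dZ (((s.erase c).erase (upc c)).erase (upc (upc c))) else 0)) := by
    rw [← Finset.sum_add_distrib, ← Finset.sum_add_distrib]
    exact Finset.sum_congr rfl fun c hc => Ed_erase_expand hy hc
  rw [hL, hR, sumA_swap, sumB_zero hy]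
  ring

lemma zero_mem {s : Finset (ℕ × ℕ)} (hy : yg s) :
    ∀ n (p : ℕ × ℕ), p.1 + p.2 ≤ n → p ∈ s → (0, 0) ∈ s := by
  intro n
  induction n with
  | zero =>
    intro p hp hm
    have : p = (0, 0) := by
      have h1 : p.1 = 0 := by omega
      have h2 : p.2 = 0 := by omega
      exact Prod.ext h1 h2
    rwa [this] at hm
  | succ n ih =>
    intro p hp hm
    by_cases h2 : 1 ≤ p.2
    · exact ih (p.1, p.2 - 1) (by simp; omega) (yg_left hy hm h2)
    · by_cases h1 : 1 ≤ p.1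
      · exact ih (p.1 - 1, p.2) (by simp; omega) (yg_up hy hm h1)
      · have : p = (0, 0) := Prod.ext (by omega) (by omega)
        rwa [this] at hm

lemma eq_single_of_card_one {s : Finset (ℕ × ℕ)} (hy : yg s) (h1 : s.card = 1) :
    s = {(0, 0)} := by
  obtain ⟨a, ha⟩ := Finset.card_eq_one.1 h1
  have hmem : a ∈ s := by rw [ha]; simp
  have h0 : (0, 0) ∈ s := zero_mem hy (a.1 + a.2) a le_rfl hmem
  rw [ha] at h0 ⊢
  rw [Finset.mem_singleton] at h0
  rw [← h0]

lemma f_card_one {s : Finset (ℕ × ℕ)} (hy : yg s) (h1 : s.card = 1) : fJM s = 0 := by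
  rw [eq_single_of_card_one hy h1]
  unfold fJM
  apply Finset.sum_eq_zero
  intro c hc
  have := corners_subset hc
  simp at this
  rw [this]
  simp [boxContent]

lemma key : ∀ n : ℕ, ∀ s : Finset (ℕ × ℕ), yg s → s.card = n → 1 ≤ n →
    fJM s = ((n : ℤ) - 1) * Ed s := by
  intro n
  induction n using Nat.strong_induction_on with
  | _ n ih =>
    intro s hy hcard hn
    by_cases h1 : n = 1
    · subst h1
      rw [f_card_one hy hcard]
      simp
    · have h2 : 2 ≤ n := by omega
      have hrec := f_rec hy (hcard ▸ h2)
      have hsum : ∑ c ∈ corners s, fJM (s.erase c)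
          = ((n : ℤ) - 2) * ∑ c ∈ corners s, Ed (s.erase c) := by
        rw [Finset.mul_sum]
        refine Finset.sum_congr rfl fun c hc => ?_
        have hcard' : (s.erase c).card = n - 1 := by
          rw [Finset.card_erase_of_mem (corners_subset hc), hcard]
        have := ih (n - 1) (by omega) (s.erase c) (yg_erase hy hc) hcard' (by omega)
        rw [this]
        congr 1
        push_cast [Nat.cast_sub (by omega : 1 ≤ n)]
        ring
      by_cases h3 : n = 2
      · subst h3
        rw [hrec, hsum]
        norm_num
      · have h3' : 3 ≤ n := by omega
        rw [hrec, hsum, ← Ed_rec hy (hcard ▸ h3')]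
        ring

lemma Csum_erase {s : Finset (ℕ × ℕ)} {c : ℕ × ℕ} (hc : c ∈ s) :
    Csum (s.erase c) = Csum s - boxContent c := Finset.sum_erase_eq_sub hc

lemma main : ∀ n : ℕ, ∀ s : Finset (ℕ × ℕ), yg s → s.card = n → 1 ≤ n →
    (n : ℤ) * fJM s = 2 * dZ s * Csum s := by
  intro n
  induction n using Nat.strong_induction_on with
  | _ n ih =>
    intro s hy hcard hn
    by_cases h1 : n = 1
    · subst h1
      rw [f_card_one hy hcard, eq_single_of_card_one hy hcard]
      simp [Csum, boxContent]
    · have h2 : 2 ≤ n := by omega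
      have hrec := f_rec hy (hcard ▸ h2)
      have hkey := key n s hy hcard hn
      have hdb : dZ s = ∑ c ∈ corners s, dZ (s.erase c) :=
        dim_branch (Finset.card_pos.1 (by omega))
      have e1 : ∑ c ∈ corners s, ((n : ℤ) - 1) * fJM (s.erase c)
          = 2 * Csum s * (∑ c ∈ corners s, dZ (s.erase c))
            - 2 * (∑ c ∈ corners s, dZ (s.erase c) * boxContent c) := by
        rw [Finset.mul_sum, Finset.mul_sum, ← Finset.sum_sub_distrib]
        refine Finset.sum_congr rfl fun c hc => ?_
        have hcard' : (s.erase c).card = n - 1 := by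
          rw [Finset.card_erase_of_mem (corners_subset hc), hcard]
        have hih := ih (n - 1) (by omega) (s.erase c) (yg_erase hy hc) hcard' (by omega)
        have hcast : (((n : ℕ) - 1 : ℕ) : ℤ) = (n : ℤ) - 1 := by
          push_cast [Nat.cast_sub (by omega : 1 ≤ n)]; ring
        rw [hcast] at hih
        rw [hih, Csum_erase (corners_subset hc)]
        ring
      have e2 : ∑ c ∈ corners s, dZ (s.erase c) * boxContent c = fJM s := rfl
      have e3 : ((n : ℤ) - 1) * fJM s
          = ((n : ℤ) - 1) * Ed s + ∑ c ∈ corners s, ((n : ℤ) - 1) * fJM (s.erase c) := by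
        rw [hrec, ← Finset.mul_sum]
        ring
      rw [e1, e2, ← hdb, ← hkey] at e3
      linarith [e3]

lemma yg_youngDiagram (ν : YoungDiagram) : yg ν.cells := by
  intro p
  constructor
  · intro h
    rw [YoungDiagram.mem_cells] at h ⊢
    exact ν.up_left_mem le_rfl (Nat.le_succ _) h
  · intro h
    rw [YoungDiagram.mem_cells] at h ⊢
    exact ν.up_left_mem (Nat.le_succ _) le_rfl h

end TJM

/-- `|ν| · ∑_{λ ∈ ν∖1} (dim λ) · cr(□_{ν/λ}) = 2 · (dim ν) · ∑_{□∈ν} cr(□)`. -/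
theorem trace_JM_identity (ν : YoungDiagram) (h : ν.cells.Nonempty) :
    (ν.cells.card : ℤ) *
        ∑ c ∈ corners ν.cells, (dimSYT (ν.cells.erase c) : ℤ) * boxContent c
      = 2 * (dimSYT ν.cells : ℤ) * ∑ c ∈ ν.cells, boxContent c := by
  exact TJM.main ν.cells.card ν.cells (TJM.yg_youngDiagram ν) rfl (Finset.card_pos.2 h)
end

section
/- For any partition ν of n, the coefficient of w³ in the power series expansion (around w = 0) of g_ν(n/2 + 1 + 1/w)/g_ν(n/2 + 1/w) equals 2∑_{□∈ν} cr(□) + n³/4, where g_ν(x) = ∏_{i=1}^{n}(x + ν_i − i) and cr denotes box contents. -/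
open Finset PowerSeries

private lemma coeff_one_add_mul (c : ℚ) (P : PowerSeries ℚ) (k : ℕ) :
    PowerSeries.coeff (R := ℚ) (k+1) ((1 + PowerSeries.C (R := ℚ) c * PowerSeries.X) * P)
      = PowerSeries.coeff (R := ℚ) (k+1) P + c * PowerSeries.coeff (R := ℚ) k P := by
  rw [add_mul, one_mul, mul_assoc, map_add, PowerSeries.coeff_C_mul,
    PowerSeries.coeff_succ_X_mul]

private lemma coeff_prod013 (s : Finset ℕ) (f : ℕ → ℚ) :
    PowerSeries.coeff (R := ℚ) 0 (∏ i ∈ s, (1 + PowerSeries.C (R := ℚ) (f i) * PowerSeries.X)) = 1 ∧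
    PowerSeries.coeff (R := ℚ) 1 (∏ i ∈ s, (1 + PowerSeries.C (R := ℚ) (f i) * PowerSeries.X))
      = ∑ i ∈ s, f i ∧
    PowerSeries.coeff (R := ℚ) 2 (∏ i ∈ s, (1 + PowerSeries.C (R := ℚ) (f i) * PowerSeries.X))
      = ((∑ i ∈ s, f i)^2 - ∑ i ∈ s, (f i)^2)/2 ∧
    PowerSeries.coeff (R := ℚ) 3 (∏ i ∈ s, (1 + PowerSeries.C (R := ℚ) (f i) * PowerSeries.X))
      = ((∑ i ∈ s, f i)^3 - 3*(∑ i ∈ s, f i)*(∑ i ∈ s, (f i)^2)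
          + 2*(∑ i ∈ s, (f i)^3))/6 := by
  induction s using Finset.cons_induction with
  | empty => simp
  | cons a s ha ih =>
    obtain ⟨h0, h1, h2, h3⟩ := ih
    rw [Finset.prod_cons]
    have s1 := coeff_one_add_mul (f a) (∏ i ∈ s, (1 + PowerSeries.C (R := ℚ) (f i) * PowerSeries.X)) 0
    have s2 := coeff_one_add_mul (f a) (∏ i ∈ s, (1 + PowerSeries.C (R := ℚ) (f i) * PowerSeries.X)) 1
    have s3 := coeff_one_add_mul (f a) (∏ i ∈ s, (1 + PowerSeries.C (R := ℚ) (f i) * PowerSeries.X)) 2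
    norm_num at s1 s2 s3
    refine ⟨?_, ?_, ?_, ?_⟩
    · simp
    · rw [s1, h1, Finset.sum_cons]; ring
    · rw [s2, h1, h2, Finset.sum_cons, Finset.sum_cons]; ring
    · rw [s3, h2, h3, Finset.sum_cons, Finset.sum_cons, Finset.sum_cons]; ring

private lemma row_lt_card {ν : YoungDiagram} {i j : ℕ} (h : (i, j) ∈ ν) :
    i < ν.cells.card := by
  have hsub : (Finset.range (i+1)).image (fun k => (k, 0)) ⊆ ν.cells := by
    intro c hc
    simp only [Finset.mem_image, Finset.mem_range] at hc
    obtain ⟨k, hk, rfl⟩ := hc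
    exact YoungDiagram.mem_cells _ |>.2 (ν.up_left_mem (Nat.lt_succ_iff.1 hk) (Nat.zero_le _) h)
  have := Finset.card_le_card hsub
  rwa [Finset.card_image_of_injective _ (fun a b hab => (Prod.mk.inj hab).1),
    Finset.card_range, Nat.succ_le_iff] at this

private lemma sum_cells (ν : YoungDiagram) (f : ℕ × ℕ → ℚ) :
    ∑ c ∈ ν.cells, f c
      = ∑ i ∈ Finset.range ν.cells.card, ∑ j ∈ Finset.range (ν.rowLen i), f (i, j) := by
  have hbi : ν.cells = (Finset.range ν.cells.card).biUnion
      (fun i => (Finset.range (ν.rowLen i)).image (fun j => (i, j))) := by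
    ext ⟨i, j⟩
    simp only [Finset.mem_biUnion, Finset.mem_range, Finset.mem_image,
      YoungDiagram.mem_cells]
    constructor
    · intro h
      exact ⟨i, row_lt_card h, j, YoungDiagram.mem_iff_lt_rowLen.1 h, rfl⟩
    · rintro ⟨i', _, j', hj', h⟩
      cases h
      exact YoungDiagram.mem_iff_lt_rowLen.2 hj'
  conv_lhs => rw [hbi]
  rw [Finset.sum_biUnion]
  · exact Finset.sum_congr rfl fun i _ =>
      Finset.sum_image (fun a _ b _ hab => (Prod.mk.inj hab).2)
  · intro x _ y _ hxy
    simp only [Finset.disjoint_left, Finset.mem_image, Finset.mem_range]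
    rintro c ⟨j, _, rfl⟩ ⟨j', _, h⟩
    exact hxy ((Prod.mk.inj h).1).symm

private lemma gauss1 (n : ℕ) : ∑ i ∈ Finset.range n, (i:ℚ) = n*(n-1)/2 := by
  induction n with
  | zero => simp
  | succ m ih => rw [Finset.sum_range_succ, ih]; push_cast; ring

private lemma gauss2 (n : ℕ) : ∑ i ∈ Finset.range n, (i:ℚ)^2 = n*(n-1)*(2*n-1)/6 := by
  induction n with
  | zero => simp
  | succ m ih => rw [Finset.sum_range_succ, ih]; push_cast; ring

private lemma sum_comb (n : ℕ) (f g1 g2 g3 g4 : ℕ → ℚ) (c1 c2 c3 c4 e : ℚ)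
    (hpt : ∀ i ∈ Finset.range n, f i = c1 * g1 i + c2 * g2 i + c3 * g3 i + c4 * g4 i + e) :
    ∑ i ∈ Finset.range n, f i
      = c1 * (∑ i ∈ Finset.range n, g1 i) + c2 * (∑ i ∈ Finset.range n, g2 i)
        + c3 * (∑ i ∈ Finset.range n, g3 i) + c4 * (∑ i ∈ Finset.range n, g4 i)
        + (n:ℚ) * e := by
  rw [Finset.sum_congr rfl hpt]
  simp [Finset.sum_add_distrib, Finset.mul_sum, Finset.sum_const, Finset.card_range,
    nsmul_eq_mul]

/-- For a partition ν of n, substituting `x = n/2 + 1/w` into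
`g_ν(x+1)/g_ν(x)` (with `g_ν(x) = ∏_{i=1}^{n}(x + ν_i − i)`, so that the ratio
becomes the power series
`∏_{i=1}^{n}(1 + w(n/2 + 1 + ν_i − i)) · (∏_{i=1}^{n}(1 + w(n/2 + ν_i − i)))⁻¹`),
the coefficient of `w³` equals `2∑_{□∈ν} cr(□) + n³/4`. -/
theorem g_shift_ratio_w3_coeff (ν : YoungDiagram) :
    PowerSeries.coeff (R := ℚ) 3
      ((∏ i ∈ range ν.cells.card,
          (1 + PowerSeries.C (R := ℚ) ((ν.cells.card : ℚ) / 2 + 1 + (ν.rowLen i : ℚ)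
              - ((i : ℚ) + 1)) * PowerSeries.X)) *
        (∏ i ∈ range ν.cells.card,
          (1 + PowerSeries.C (R := ℚ) ((ν.cells.card : ℚ) / 2 + (ν.rowLen i : ℚ)
              - ((i : ℚ) + 1)) * PowerSeries.X))⁻¹)
      = 2 * (∑ c ∈ ν.cells, (boxContent c : ℚ)) + (ν.cells.card : ℚ) ^ 3 / 4 := by
  set n := ν.cells.card with hn
  -- basic sums
  have hT1 : ∑ i ∈ Finset.range n, (ν.rowLen i : ℚ) = (n : ℚ) := by
    have h := sum_cells ν (fun _ => (1:ℚ))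
    simp only [Finset.sum_const, Finset.card_range, nsmul_eq_mul, mul_one] at h
    rw [← h]
  have hTC : 2 * ∑ c ∈ ν.cells, (boxContent c : ℚ)
      = ∑ i ∈ Finset.range n, ((ν.rowLen i:ℚ)^2 - (ν.rowLen i:ℚ)
          - 2*(i:ℚ)*(ν.rowLen i:ℚ)) := by
    rw [sum_cells ν (fun c => ((boxContent c : ℚ)))]
    rw [Finset.mul_sum]
    refine Finset.sum_congr rfl fun i _ => ?_
    have : ∀ j, ((boxContent (i, j) : ℚ)) = (j:ℚ) - (i:ℚ) := by
      intro j; simp [boxContent]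
    simp only [this]
    rw [Finset.sum_sub_distrib, gauss1, Finset.sum_const, Finset.card_range, nsmul_eq_mul]
    ring
  obtain ⟨hA0, hA1, hA2, hA3⟩ := coeff_prod013 (Finset.range n)
    (fun i => (n : ℚ) / 2 + 1 + (ν.rowLen i : ℚ) - ((i : ℚ) + 1))
  obtain ⟨hB0, hB1, hB2, hB3⟩ := coeff_prod013 (Finset.range n)
    (fun i => (n : ℚ) / 2 + (ν.rowLen i : ℚ) - ((i : ℚ) + 1))
  set A := ∏ i ∈ range n,
      (1 + PowerSeries.C (R := ℚ) ((n : ℚ) / 2 + 1 + (ν.rowLen i : ℚ) - ((i : ℚ) + 1))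
        * PowerSeries.X) with hAdef
  set B := ∏ i ∈ range n,
      (1 + PowerSeries.C (R := ℚ) ((n : ℚ) / 2 + (ν.rowLen i : ℚ) - ((i : ℚ) + 1))
        * PowerSeries.X) with hBdef
  have hB0ne : PowerSeries.constantCoeff (R := ℚ) B ≠ 0 := by
    rw [← PowerSeries.coeff_zero_eq_constantCoeff, hB0]; norm_num
  have hRB : A * B⁻¹ * B = A := by
    rw [mul_assoc, mul_comm B⁻¹ B, PowerSeries.mul_inv_cancel B hB0ne, mul_one]
  have e0 := congrArg (PowerSeries.coeff (R := ℚ) 0) hRB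
  have e1 := congrArg (PowerSeries.coeff (R := ℚ) 1) hRB
  have e2 := congrArg (PowerSeries.coeff (R := ℚ) 2) hRB
  have e3 := congrArg (PowerSeries.coeff (R := ℚ) 3) hRB
  rw [PowerSeries.coeff_mul, Finset.Nat.sum_antidiagonal_eq_sum_range_succ_mk] at e0 e1 e2 e3
  simp only [Finset.sum_range_succ, Finset.sum_range_zero, zero_add] at e0 e1 e2 e3
  norm_num at e0 e1 e2 e3
  clear e0
  have hcA : PowerSeries.constantCoeff (R := ℚ) A = 1 := by
    rw [← PowerSeries.coeff_zero_eq_constantCoeff]; exact hA0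
  have hcB : PowerSeries.constantCoeff (R := ℚ) B = 1 := by
    rw [← PowerSeries.coeff_zero_eq_constantCoeff]; exact hB0
  rw [hcA, hcB] at e1 e2 e3
  simp only [inv_one, one_mul, mul_one] at e1 e2 e3
  -- sum relations between the A-sums and B-sums
  have hS1 : ∑ i ∈ Finset.range n, ((n:ℚ)/2 + 1 + (ν.rowLen i:ℚ) - ((i:ℚ)+1))
      = (∑ i ∈ Finset.range n, ((n:ℚ)/2 + (ν.rowLen i:ℚ) - ((i:ℚ)+1))) + (n:ℚ) := by
    have hpt : ∀ i ∈ Finset.range n, ((n:ℚ)/2 + 1 + (ν.rowLen i:ℚ) - ((i:ℚ)+1))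
        = ((n:ℚ)/2 + (ν.rowLen i:ℚ) - ((i:ℚ)+1)) + 1 := fun i _ => by ring
    rw [Finset.sum_congr rfl hpt, Finset.sum_add_distrib, Finset.sum_const,
      Finset.card_range, nsmul_eq_mul, mul_one]
  have hS2 : ∑ i ∈ Finset.range n, ((n:ℚ)/2 + 1 + (ν.rowLen i:ℚ) - ((i:ℚ)+1))^2
      = (∑ i ∈ Finset.range n, ((n:ℚ)/2 + (ν.rowLen i:ℚ) - ((i:ℚ)+1))^2)
        + 2 * (∑ i ∈ Finset.range n, ((n:ℚ)/2 + (ν.rowLen i:ℚ) - ((i:ℚ)+1))) + (n:ℚ) := by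
    have hpt : ∀ i ∈ Finset.range n, ((n:ℚ)/2 + 1 + (ν.rowLen i:ℚ) - ((i:ℚ)+1))^2
        = ((n:ℚ)/2 + (ν.rowLen i:ℚ) - ((i:ℚ)+1))^2
          + 2 * ((n:ℚ)/2 + (ν.rowLen i:ℚ) - ((i:ℚ)+1)) + 1 := fun i _ => by ring
    rw [Finset.sum_congr rfl hpt, Finset.sum_add_distrib, Finset.sum_add_distrib,
      ← Finset.mul_sum, Finset.sum_const, Finset.card_range, nsmul_eq_mul, mul_one]
  have hS3 : ∑ i ∈ Finset.range n, ((n:ℚ)/2 + 1 + (ν.rowLen i:ℚ) - ((i:ℚ)+1))^3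
      = (∑ i ∈ Finset.range n, ((n:ℚ)/2 + (ν.rowLen i:ℚ) - ((i:ℚ)+1))^3)
        + 3 * (∑ i ∈ Finset.range n, ((n:ℚ)/2 + (ν.rowLen i:ℚ) - ((i:ℚ)+1))^2)
        + 3 * (∑ i ∈ Finset.range n, ((n:ℚ)/2 + (ν.rowLen i:ℚ) - ((i:ℚ)+1))) + (n:ℚ) := by
    have hpt : ∀ i ∈ Finset.range n, ((n:ℚ)/2 + 1 + (ν.rowLen i:ℚ) - ((i:ℚ)+1))^3
        = ((n:ℚ)/2 + (ν.rowLen i:ℚ) - ((i:ℚ)+1))^3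
          + 3 * ((n:ℚ)/2 + (ν.rowLen i:ℚ) - ((i:ℚ)+1))^2
          + 3 * ((n:ℚ)/2 + (ν.rowLen i:ℚ) - ((i:ℚ)+1)) + 1 := fun i _ => by ring
    rw [Finset.sum_congr rfl hpt, Finset.sum_add_distrib, Finset.sum_add_distrib,
      Finset.sum_add_distrib, ← Finset.mul_sum, ← Finset.mul_sum, Finset.sum_const,
      Finset.card_range, nsmul_eq_mul, mul_one]
  -- values of the B-sums
  have hSB1 : ∑ i ∈ Finset.range n, ((n:ℚ)/2 + (ν.rowLen i:ℚ) - ((i:ℚ)+1)) = (n:ℚ)/2 := by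
    have hpt : ∀ i ∈ Finset.range n, ((n:ℚ)/2 + (ν.rowLen i:ℚ) - ((i:ℚ)+1))
        = (ν.rowLen i:ℚ) + (((n:ℚ)/2 - 1) - (i:ℚ)) := fun i _ => by ring
    rw [Finset.sum_congr rfl hpt, Finset.sum_add_distrib, hT1, Finset.sum_sub_distrib,
      Finset.sum_const, Finset.card_range, gauss1, nsmul_eq_mul]
    ring
  have hSB2 : ∑ i ∈ Finset.range n, ((n:ℚ)/2 + (ν.rowLen i:ℚ) - ((i:ℚ)+1))^2
      = 2 * (∑ c ∈ ν.cells, (boxContent c : ℚ))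
        + (((n:ℚ)-1)*(n:ℚ) + (n:ℚ)*((n:ℚ)/2-1)^2
          - ((n:ℚ)-2)*((n:ℚ)*((n:ℚ)-1)/2) + (n:ℚ)*((n:ℚ)-1)*(2*(n:ℚ)-1)/6) := by
    have h := sum_comb n (fun i => ((n:ℚ)/2 + (ν.rowLen i:ℚ) - ((i:ℚ)+1))^2)
      (fun i => (ν.rowLen i:ℚ)^2 - (ν.rowLen i:ℚ) - 2*(i:ℚ)*(ν.rowLen i:ℚ))
      (fun i => (ν.rowLen i:ℚ)) (fun i => (i:ℚ)) (fun i => (i:ℚ)^2)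
      1 ((n:ℚ)-1) (-((n:ℚ)-2)) 1 (((n:ℚ)/2-1)^2) (fun i _ => by ring)
    rw [h, ← hTC, hT1, gauss1, gauss2]
    ring
  rw [hA1, hB1, hS1, hSB1] at e1
  rw [hA2, hB2, hB1, hS2, hS1, hSB2, hSB1] at e2
  rw [hA3, hB3, hB2, hB1, hS3, hS2, hS1, hSB2, hSB1] at e3
  have hr1 : PowerSeries.coeff (R := ℚ) 1 (A * B⁻¹) = (n:ℚ) := by linear_combination e1
  rw [hr1] at e2 e3
  have hr2 : PowerSeries.coeff (R := ℚ) 2 (A * B⁻¹) = (n:ℚ)^2/2 - (n:ℚ) := by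
    linear_combination e2
  rw [hr2] at e3
  linear_combination e3
end
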